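/- arXiv:1306.6909 — 3 statements merged into one kernel-verified Lean document; each statement's English description precedes it below -/
import Mathlib

section
/- If m = Σ_{i=1}^N a_i δ_{x_i} is a discrete measure with nonzero amplitudes a_i and distinct points x_i, then the subdifferential of the total variation at m equals { η ∈ C(T) : ‖η‖_∞ ≤ 1 and η(x_i) = sign(a_i) for all i }. -/
open MeasureTheory

instance fact_zero_lt_one_real : Fact ((0 : ℝ) < 1) := ⟨zero_lt_one⟩

noncomputable section

/-- The torus `T = ℝ/ℤ`. -/
abbrev 𝕋 := AddCircle (1 : ℝ)

/-- Integral `∫ f dm` of a function against a (finite) signed Radon measure on the torus. -/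
def sInt (m : SignedMeasure 𝕋) (f : 𝕋 → ℝ) : ℝ :=
  ∫ x, f x ∂m.toJordanDecomposition.posPart - ∫ x, f x ∂m.toJordanDecomposition.negPart

/-- The total variation norm `‖m‖_TV = sup { ∫ ψ dm : ψ ∈ C(𝕋), ‖ψ‖_∞ ≤ 1 }`. -/
def tv (m : SignedMeasure 𝕋) : ℝ :=
  sSup { r | ∃ ψ : C(𝕋, ℝ), ‖ψ‖ ≤ 1 ∧ r = sInt m ψ }

/-- The subdifferential of the total variation norm at `m`. -/
def subdiffTV (m : SignedMeasure 𝕋) : Set C(𝕋, ℝ) :=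
  { η | ∀ m' : SignedMeasure 𝕋, tv m' ≥ tv m + sInt (m' - m) η }

/-- The Dirac mass at a point, as a signed measure. -/
def mdirac (x : 𝕋) : SignedMeasure 𝕋 := (Measure.dirac x).toSignedMeasure

/- ### Auxiliary lemmas -/

lemma cm_integrable (f : C(𝕋, ℝ)) (μ : Measure 𝕋) [IsFiniteMeasure μ] : Integrable f μ :=
  f.continuous.integrable_of_hasCompactSupport (HasCompactSupport.of_compactSpace f)

lemma jd_rep (m : SignedMeasure 𝕋) :
    m = m.toJordanDecomposition.posPart.toSignedMeasure
      - m.toJordanDecomposition.negPart.toSignedMeasure := by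
  conv_lhs => rw [← SignedMeasure.toSignedMeasure_toJordanDecomposition m]
  rfl

lemma sInt_eq (m : SignedMeasure 𝕋) (P Q : Measure 𝕋) [IsFiniteMeasure P] [IsFiniteMeasure Q]
    (h : m = P.toSignedMeasure - Q.toSignedMeasure) (f : C(𝕋, ℝ)) :
    sInt m f = ∫ x, f x ∂P - ∫ x, f x ∂Q := by
  set pos := m.toJordanDecomposition.posPart with hpos
  set neg := m.toJordanDecomposition.negPart with hneg
  have hjd : pos.toSignedMeasure - neg.toSignedMeasure = P.toSignedMeasure - Q.toSignedMeasure := by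
    rw [← jd_rep m, h]
  have hadd : pos.toSignedMeasure + Q.toSignedMeasure = P.toSignedMeasure + neg.toSignedMeasure := by
    have := sub_eq_sub_iff_add_eq_add.mp hjd
    linear_combination (norm := skip) this
    abel
  rw [← Measure.toSignedMeasure_add, ← Measure.toSignedMeasure_add] at hadd
  have key : pos + Q = P + neg := Measure.toSignedMeasure_eq_toSignedMeasure_iff.mp hadd
  have h1 : ∫ x, f x ∂pos + ∫ x, f x ∂Q = ∫ x, f x ∂P + ∫ x, f x ∂neg := by
    rw [← integral_add_measure (cm_integrable f pos) (cm_integrable f Q),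
        ← integral_add_measure (cm_integrable f P) (cm_integrable f neg), key]
  simp only [sInt, ← hpos, ← hneg]
  linarith

lemma sInt_zero (f : C(𝕋, ℝ)) : sInt 0 f = 0 := by
  rw [sInt_eq 0 0 0 (by simp) f]
  simp

lemma sInt_add (m₁ m₂ : SignedMeasure 𝕋) (f : C(𝕋, ℝ)) :
    sInt (m₁ + m₂) f = sInt m₁ f + sInt m₂ f := by
  rw [sInt_eq (m₁ + m₂) (m₁.toJordanDecomposition.posPart + m₂.toJordanDecomposition.posPart)
      (m₁.toJordanDecomposition.negPart + m₂.toJordanDecomposition.negPart)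
      (by rw [Measure.toSignedMeasure_add, Measure.toSignedMeasure_add]
          conv_lhs => rw [jd_rep m₁, jd_rep m₂]
          abel) f,
    integral_add_measure (cm_integrable f _) (cm_integrable f _),
    integral_add_measure (cm_integrable f _) (cm_integrable f _)]
  simp only [sInt]
  ring

lemma sInt_sub (m₁ m₂ : SignedMeasure 𝕋) (f : C(𝕋, ℝ)) :
    sInt (m₁ - m₂) f = sInt m₁ f - sInt m₂ f := by
  rw [sInt_eq (m₁ - m₂) (m₁.toJordanDecomposition.posPart + m₂.toJordanDecomposition.negPart)
      (m₁.toJordanDecomposition.negPart + m₂.toJordanDecomposition.posPart)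
      (by rw [Measure.toSignedMeasure_add, Measure.toSignedMeasure_add]
          conv_lhs => rw [jd_rep m₁, jd_rep m₂]
          abel) f,
    integral_add_measure (cm_integrable f _) (cm_integrable f _),
    integral_add_measure (cm_integrable f _) (cm_integrable f _)]
  simp only [sInt]
  ring

lemma toNNReal_sub_neg (a : ℝ) : (a.toNNReal : ℝ) - ((-a).toNNReal : ℝ) = a := by
  rw [Real.coe_toNNReal', Real.coe_toNNReal']
  rcases le_total 0 a with h | h
  · rw [max_eq_left h, max_eq_right (neg_nonpos.mpr h)]; ring
  · rw [max_eq_right h, max_eq_left (neg_nonneg.mpr h)]; ring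

lemma sInt_smul_dirac (c : ℝ) (y : 𝕋) (f : C(𝕋, ℝ)) :
    sInt (c • mdirac y) f = c * f y := by
  have hrep : c • mdirac y
      = (c.toNNReal • Measure.dirac y).toSignedMeasure
        - ((-c).toNNReal • Measure.dirac y).toSignedMeasure := by
    ext s hs
    rw [VectorMeasure.sub_apply, Measure.toSignedMeasure_apply_measurable hs,
      Measure.toSignedMeasure_apply_measurable hs, VectorMeasure.smul_apply, mdirac,
      Measure.toSignedMeasure_apply_measurable hs]
    simp only [measureReal_def, Measure.smul_apply, smul_eq_mul, ENNReal.smul_def, ENNReal.toReal_mul,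
      ENNReal.coe_toReal]
    linear_combination (-((Measure.dirac y) s).toReal) * toNNReal_sub_neg c
  rw [sInt_eq _ _ _ hrep f, integral_smul_nnreal_measure, integral_smul_nnreal_measure,
    integral_dirac]
  simp only [NNReal.smul_def, smul_eq_mul]
  linear_combination (f y) * toNNReal_sub_neg c

lemma sInt_finset_sum {ι : Type*} (s : Finset ι) (g : ι → SignedMeasure 𝕋) (f : C(𝕋, ℝ)) :
    sInt (∑ i ∈ s, g i) f = ∑ i ∈ s, sInt (g i) f := by
  induction s using Finset.cons_induction with
  | empty => simpa using sInt_zero f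
  | cons a s h ih => rw [Finset.sum_cons, Finset.sum_cons, sInt_add, ih]

lemma sInt_discrete {N : ℕ} (a : Fin N → ℝ) (x : Fin N → 𝕋) (f : C(𝕋, ℝ)) :
    sInt (∑ i, a i • mdirac (x i)) f = ∑ i, a i * f (x i) := by
  rw [sInt_finset_sum]
  exact Finset.sum_congr rfl fun i _ => sInt_smul_dirac (a i) (x i) f

/- ### Properties of `tv` -/

lemma tv_bddAbove (m : SignedMeasure 𝕋) :
    BddAbove { r | ∃ ψ : C(𝕋, ℝ), ‖ψ‖ ≤ 1 ∧ r = sInt m ψ } := by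
  refine ⟨(m.toJordanDecomposition.posPart Set.univ).toReal
    + (m.toJordanDecomposition.negPart Set.univ).toReal, ?_⟩
  rintro r ⟨ψ, hψ, rfl⟩
  have h1 : ‖∫ x, ψ x ∂m.toJordanDecomposition.posPart‖
      ≤ 1 * (m.toJordanDecomposition.posPart Set.univ).toReal :=
    norm_integral_le_of_norm_le_const (Filter.Eventually.of_forall fun y =>
      le_trans (ψ.norm_coe_le_norm y) hψ)
  have h2 : ‖∫ x, ψ x ∂m.toJordanDecomposition.negPart‖
      ≤ 1 * (m.toJordanDecomposition.negPart Set.univ).toReal :=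
    norm_integral_le_of_norm_le_const (Filter.Eventually.of_forall fun y =>
      le_trans (ψ.norm_coe_le_norm y) hψ)
  rw [Real.norm_eq_abs] at h1 h2
  simp only [sInt]
  cases' abs_le.mp h1 with h1a h1b
  cases' abs_le.mp h2 with h2a h2b
  linarith

lemma sInt_le_tv (m : SignedMeasure 𝕋) (ψ : C(𝕋, ℝ)) (h : ‖ψ‖ ≤ 1) : sInt m ψ ≤ tv m :=
  le_csSup (tv_bddAbove m) ⟨ψ, h, rfl⟩

lemma tv_nonneg (m : SignedMeasure 𝕋) : 0 ≤ tv m := by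
  have h0 : sInt m ((0 : C(𝕋, ℝ)) : 𝕋 → ℝ) = 0 := by simp [sInt]
  have := sInt_le_tv m 0 (by simp)
  rwa [h0] at this

lemma tv_le (m : SignedMeasure 𝕋) (C : ℝ) (hC : 0 ≤ C)
    (h : ∀ ψ : C(𝕋, ℝ), ‖ψ‖ ≤ 1 → sInt m ψ ≤ C) : tv m ≤ C := by
  apply Real.sSup_le _ hC
  rintro r ⟨ψ, hψ, rfl⟩
  exact h ψ hψ

lemma tv_add_le (m₁ m₂ : SignedMeasure 𝕋) : tv (m₁ + m₂) ≤ tv m₁ + tv m₂ := by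
  apply tv_le _ _ (add_nonneg (tv_nonneg m₁) (tv_nonneg m₂))
  intro ψ hψ
  rw [sInt_add]
  exact add_le_add (sInt_le_tv m₁ ψ hψ) (sInt_le_tv m₂ ψ hψ)

lemma tv_smul_dirac_le (c : ℝ) (y : 𝕋) : tv (c • mdirac y) ≤ |c| := by
  apply tv_le _ _ (abs_nonneg c)
  intro ψ hψ
  rw [sInt_smul_dirac]
  calc c * ψ y ≤ |c * ψ y| := le_abs_self _
    _ = |c| * |ψ y| := abs_mul _ _
    _ ≤ |c| * 1 := by
        apply mul_le_mul_of_nonneg_left _ (abs_nonneg c)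
        exact le_trans (ψ.norm_coe_le_norm y) hψ
    _ = |c| := mul_one _

/- ### Separation and the bump function -/

lemma exists_sep {N : ℕ} (x : Fin N → 𝕋) (hx : Function.Injective x) :
    ∃ ε > 0, ∀ i j, i ≠ j → ε ≤ dist (x i) (x j) := by
  rcases (Finset.univ.offDiag (α := Fin N)).eq_empty_or_nonempty with he | hne
  · refine ⟨1, one_pos, fun i j hij => ?_⟩
    exfalso
    have hmem : (i, j) ∈ (Finset.univ.offDiag (α := Fin N)) :=
      Finset.mem_offDiag.mpr ⟨Finset.mem_univ i, Finset.mem_univ j, hij⟩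
    rw [he] at hmem
    exact Finset.notMem_empty _ hmem
  · obtain ⟨p, hp, hmin⟩ := Finset.exists_min_image _ (fun p => dist (x p.1) (x p.2)) hne
    have hne' : p.1 ≠ p.2 := (Finset.mem_offDiag.mp hp).2.2
    refine ⟨dist (x p.1) (x p.2), dist_pos.mpr (fun h => hne' (hx h)), fun i j hij => ?_⟩
    exact hmin (i, j) (Finset.mem_offDiag.mpr ⟨Finset.mem_univ i, Finset.mem_univ j, hij⟩)

lemma exists_good {N : ℕ} (a : Fin N → ℝ) (x : Fin N → 𝕋)
    (ha : ∀ i, a i ≠ 0) (hx : Function.Injective x) :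
    ∃ ψ : C(𝕋, ℝ), ‖ψ‖ ≤ 1 ∧ ∀ i, ψ (x i) = Real.sign (a i) := by
  obtain ⟨ε, hε, hsep⟩ := exists_sep x hx
  set g : Fin N → 𝕋 → ℝ := fun i y => max 0 (1 - dist y (x i) * (2 / ε)) with hg
  have hgc : ∀ i, Continuous (g i) := fun i =>
    continuous_const.max (continuous_const.sub
      ((continuous_id.dist continuous_const).mul continuous_const))
  have hg01 : ∀ i y, 0 ≤ g i y ∧ g i y ≤ 1 := by
    intro i y
    refine ⟨le_max_left _ _, max_le zero_le_one ?_⟩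
    have : 0 ≤ dist y (x i) * (2 / ε) :=
      mul_nonneg dist_nonneg (div_nonneg (by norm_num) hε.le)
    linarith
  have hgz : ∀ i y, ε / 2 ≤ dist y (x i) → g i y = 0 := by
    intro i y hd
    have h2 : (1 : ℝ) ≤ dist y (x i) * (2 / ε) := by
      calc (1 : ℝ) = ε / 2 * (2 / ε) := by field_simp
        _ ≤ dist y (x i) * (2 / ε) := mul_le_mul_of_nonneg_right hd (by positivity)
    have hgy : g i y = max 0 (1 - dist y (x i) * (2 / ε)) := rfl
    rw [hgy, max_eq_left]
    linarith
  have hsign1 : ∀ i, |Real.sign (a i)| ≤ 1 := by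
    intro i
    rcases Real.sign_apply_eq (a i) with h | h | h <;> rw [h] <;> norm_num
  refine ⟨⟨fun y => ∑ i, Real.sign (a i) * g i y, ?_⟩, ?_, ?_⟩
  · exact continuous_finset_sum _ fun i _ => continuous_const.mul (hgc i)
  · rw [ContinuousMap.norm_le _ zero_le_one]
    intro y
    simp only [ContinuousMap.coe_mk, Real.norm_eq_abs]
    by_cases hE : ∃ i, dist y (x i) < ε / 2
    · obtain ⟨i0, hi0⟩ := hE
      have hz : ∀ j, j ≠ i0 → Real.sign (a j) * g j y = 0 := by
        intro j hj
        have : ε / 2 ≤ dist y (x j) := by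
          by_contra hlt
          push_neg at hlt
          have : dist (x i0) (x j) < ε := by
            calc dist (x i0) (x j) ≤ dist (x i0) y + dist y (x j) := dist_triangle _ _ _
              _ < ε / 2 + ε / 2 := by rw [dist_comm (x i0) y]; exact add_lt_add hi0 hlt
              _ = ε := by ring
          exact absurd (hsep i0 j (fun h => hj h.symm)) (not_le.mpr this)
        rw [hgz j y this, mul_zero]
      rw [Finset.sum_eq_single i0 (fun j _ hj => hz j hj) (by simp)]
      calc |Real.sign (a i0) * g i0 y| = |Real.sign (a i0)| * |g i0 y| := abs_mul _ _
        _ ≤ 1 * 1 := by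
            apply mul_le_mul (hsign1 i0) _ (abs_nonneg _) zero_le_one
            rw [abs_of_nonneg (hg01 i0 y).1]
            exact (hg01 i0 y).2
        _ = 1 := by norm_num
    · push_neg at hE
      have : ∀ i ∈ Finset.univ, Real.sign (a i) * g i y = 0 := by
        intro i _
        rw [hgz i y (hE i), mul_zero]
      rw [Finset.sum_eq_zero this]
      norm_num
  · intro i
    simp only [ContinuousMap.coe_mk]
    have hz : ∀ j, j ≠ i → Real.sign (a j) * g j (x i) = 0 := by
      intro j hj
      have : ε / 2 ≤ dist (x i) (x j) := le_trans (by linarith) (hsep i j (fun h => hj h.symm))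
      rw [hgz j (x i) this, mul_zero]
    rw [Finset.sum_eq_single i (fun j _ hj => hz j hj) (by simp)]
    have : g i (x i) = 1 := by
      simp only [hg, dist_self, zero_mul, sub_zero]
      exact max_eq_right zero_le_one
    rw [this, mul_one]

lemma a_mul_sign (c : ℝ) (hc : c ≠ 0) : c * Real.sign c = |c| := by
  rcases hc.lt_or_gt with h | h
  · rw [Real.sign_of_neg h, abs_of_neg h]; ring
  · rw [Real.sign_of_pos h, abs_of_pos h]; ring

lemma tv_discrete {N : ℕ} (a : Fin N → ℝ) (x : Fin N → 𝕋)
    (ha : ∀ i, a i ≠ 0) (hx : Function.Injective x) :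
    tv (∑ i, a i • mdirac (x i)) = ∑ i, |a i| := by
  apply le_antisymm
  · apply tv_le _ _ (Finset.sum_nonneg fun i _ => abs_nonneg _)
    intro ψ hψ
    rw [sInt_discrete]
    apply Finset.sum_le_sum
    intro i _
    calc a i * ψ (x i) ≤ |a i * ψ (x i)| := le_abs_self _
      _ = |a i| * |ψ (x i)| := abs_mul _ _
      _ ≤ |a i| * 1 := mul_le_mul_of_nonneg_left
          (le_trans (ψ.norm_coe_le_norm (x i)) hψ) (abs_nonneg _)
      _ = |a i| := mul_one _
  · obtain ⟨ψ, hψ, hval⟩ := exists_good a x ha hx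
    have := sInt_le_tv (∑ i, a i • mdirac (x i)) ψ hψ
    rw [sInt_discrete] at this
    calc ∑ i, |a i| = ∑ i, a i * ψ (x i) := by
          refine Finset.sum_congr rfl fun i _ => ?_
          rw [hval i, a_mul_sign (a i) (ha i)]
      _ ≤ tv (∑ i, a i • mdirac (x i)) := this

lemma tv_zero : tv (0 : SignedMeasure 𝕋) = 0 := by
  apply le_antisymm _ (tv_nonneg 0)
  apply tv_le _ _ le_rfl
  intro ψ _
  rw [sInt_zero]

/- ### Main theorem -/

/-- For a discrete measure `m = ∑ aᵢ δ_{xᵢ}` with nonzero amplitudes and distinct points,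
the subdifferential of the total variation at `m` equals
`{ η ∈ C(𝕋) : ‖η‖_∞ ≤ 1 and η(xᵢ) = sign(aᵢ) for all i }`. -/
theorem subdiff_tv_discrete (N : ℕ) (a : Fin N → ℝ) (x : Fin N → 𝕋)
    (ha : ∀ i, a i ≠ 0) (hx : Function.Injective x) :
    subdiffTV (∑ i, a i • mdirac (x i)) =
      { η : C(𝕋, ℝ) | ‖η‖ ≤ 1 ∧ ∀ i, η (x i) = Real.sign (a i) } := by
  set m := ∑ i, a i • mdirac (x i) with hm
  have htvm : tv m = ∑ i, |a i| := tv_discrete a x ha hx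
  ext η
  simp only [Set.mem_setOf_eq, subdiffTV]
  constructor
  · intro hη
    have hub : ∀ m'' : SignedMeasure 𝕋, sInt m'' η ≤ tv m'' := by
      intro m''
      have h1 := hη (m + m'')
      rw [add_sub_cancel_left] at h1
      have h2 := tv_add_le m m''
      linarith
    have hnorm : ‖η‖ ≤ 1 := by
      rw [ContinuousMap.norm_le _ zero_le_one]
      intro y
      rw [Real.norm_eq_abs, abs_le]
      constructor
      · have := hub ((-1 : ℝ) • mdirac y)
        rw [sInt_smul_dirac] at this
        have h2 := tv_smul_dirac_le (-1 : ℝ) y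
        simp only [abs_neg, abs_one] at h2
        nlinarith
      · have := hub ((1 : ℝ) • mdirac y)
        rw [sInt_smul_dirac] at this
        have h2 := tv_smul_dirac_le (1 : ℝ) y
        simp only [abs_one] at h2
        nlinarith
    refine ⟨hnorm, ?_⟩
    have heq : sInt m η = tv m := by
      apply le_antisymm (sInt_le_tv m η hnorm)
      have h0 := hη 0
      rw [sInt_sub, sInt_zero, tv_zero] at h0
      linarith
    have hsum : ∑ i, a i * η (x i) = ∑ i, |a i| := by
      rw [← sInt_discrete a x η, heq, htvm]
    have hle : ∀ i ∈ Finset.univ, a i * η (x i) ≤ |a i| := by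
      intro i _
      calc a i * η (x i) ≤ |a i * η (x i)| := le_abs_self _
        _ = |a i| * |η (x i)| := abs_mul _ _
        _ ≤ |a i| * 1 := mul_le_mul_of_nonneg_left
            (le_trans (η.norm_coe_le_norm (x i)) hnorm) (abs_nonneg _)
        _ = |a i| := mul_one _
    have heach := (Finset.sum_eq_sum_iff_of_le hle).mp hsum
    intro i
    have h := heach i (Finset.mem_univ i)
    rcases (ha i).lt_or_gt with hlt | hlt
    · rw [Real.sign_of_neg hlt]
      rw [abs_of_neg hlt] at h
      exact mul_left_cancel₀ (ha i) (by linarith : a i * η (x i) = a i * (-1))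
    · rw [Real.sign_of_pos hlt]
      rw [abs_of_pos hlt] at h
      exact mul_left_cancel₀ (ha i) (by linarith : a i * η (x i) = a i * 1)
  · rintro ⟨hnorm, hval⟩ m'
    have heq : sInt m η = tv m := by
      rw [sInt_discrete, htvm]
      refine Finset.sum_congr rfl fun i _ => ?_
      rw [hval i, a_mul_sign (a i) (ha i)]
    rw [sInt_sub, heq]
    have := sInt_le_tv m' η hnorm
    linarith
end
end

section
/- (Turán) Let P be a nontrivial complex polynomial of degree n such that |P(1)| = max_{|z|=1} |P(z)|. Then every root z₀ of P on the unit circle satisfies |arg z₀| ≥ π/n; moreover if |arg z₀| = π/n then P(z) = c(1 + zⁿ) for some nonzero constant c. -/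
namespace TuranAux

open Polynomial Finset

noncomputable def tp (N : ℕ) (c : ℤ → ℂ) (θ : ℝ) : ℂ :=
  ∑ j ∈ Finset.Icc (-(N:ℤ)) (N:ℤ), c j * Complex.exp ((j:ℂ) * θ * Complex.I)

noncomputable def dc (c : ℤ → ℂ) : ℤ → ℂ := fun j => (j:ℂ) * Complex.I * c j

lemma hasDerivAt_term (j : ℤ) (v : ℂ) (θ : ℝ) :
    HasDerivAt (fun t : ℝ => v * Complex.exp ((j:ℂ) * t * Complex.I))
      ((j:ℂ) * Complex.I * v * Complex.exp ((j:ℂ) * θ * Complex.I)) θ := by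
  have hinner : HasDerivAt (fun z : ℂ => (j:ℂ) * z * Complex.I) ((j:ℂ) * Complex.I) (θ:ℂ) := by
    simpa using ((hasDerivAt_id (θ:ℂ)).const_mul (j:ℂ)).mul_const Complex.I
  have h1 : HasDerivAt (fun z : ℂ => Complex.exp ((j:ℂ) * z * Complex.I))
      (Complex.exp ((j:ℂ) * θ * Complex.I) * ((j:ℂ) * Complex.I)) (θ:ℂ) := by
    exact (Complex.hasDerivAt_exp ((j:ℂ) * θ * Complex.I)).comp (θ:ℂ) hinner
  have h2 := (h1.comp_ofReal).const_mul v
  exact h2.congr_deriv (by ring)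

lemma hasDerivAt_tp (N : ℕ) (c : ℤ → ℂ) (θ : ℝ) :
    HasDerivAt (tp N c) (tp N (dc c) θ) θ := by
  have h : HasDerivAt (fun t : ℝ => ∑ j ∈ Finset.Icc (-(N:ℤ)) (N:ℤ),
        c j * Complex.exp ((j:ℂ) * t * Complex.I))
      (∑ j ∈ Finset.Icc (-(N:ℤ)) (N:ℤ),
        (j:ℂ) * Complex.I * c j * Complex.exp ((j:ℂ) * θ * Complex.I)) θ :=
    HasDerivAt.fun_sum fun j _ => hasDerivAt_term j (c j) θ
  exact h

lemma continuous_tp (N : ℕ) (c : ℤ → ℂ) : Continuous (tp N c) := by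
  unfold tp
  refine continuous_finset_sum _ fun j _ => Continuous.mul continuous_const ?_
  exact Complex.continuous_exp.comp (by continuity)

lemma hasDerivAt_tp_re (N : ℕ) (c : ℤ → ℂ) (θ : ℝ) :
    HasDerivAt (fun t => (tp N c t).re) ((tp N (dc c) θ).re) θ :=
  Complex.reCLM.hasFDerivAt.comp_hasDerivAt θ (hasDerivAt_tp N c θ)

lemma tp_im_deriv (N : ℕ) (c : ℤ → ℂ) (h : ∀ θ, (tp N c θ).im = 0) (θ : ℝ) :
    (tp N (dc c) θ).im = 0 := by
  have h1 : HasDerivAt (fun t => (tp N c t).im) ((tp N (dc c) θ).im) θ :=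
    Complex.imCLM.hasFDerivAt.comp_hasDerivAt θ (hasDerivAt_tp N c θ)
  have h2 : (fun t => (tp N c t).im) = fun _ => (0:ℝ) := funext h
  rw [h2] at h1
  exact h1.unique (hasDerivAt_const θ 0)

noncomputable def qp (N : ℕ) (c : ℤ → ℂ) : Polynomial ℂ :=
  ∑ j ∈ Finset.Icc (-(N:ℤ)) (N:ℤ), Polynomial.C (c j) * Polynomial.X ^ (j + N).toNat

lemma qp_natDegree_le (N : ℕ) (c : ℤ → ℂ) : (qp N c).natDegree ≤ 2 * N := by
  apply Polynomial.natDegree_sum_le_of_forall_le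
  intro j hj
  refine (Polynomial.natDegree_C_mul_X_pow_le _ _).trans ?_
  simp only [Finset.mem_Icc] at hj
  omega

lemma qp_eval (N : ℕ) (c : ℤ → ℂ) (θ : ℝ) :
    (qp N c).eval (Complex.exp ((θ:ℂ) * Complex.I)) =
      Complex.exp ((N:ℂ) * θ * Complex.I) * tp N c θ := by
  rw [qp, Polynomial.eval_finset_sum, tp, Finset.mul_sum]
  apply Finset.sum_congr rfl
  intro j hj
  simp only [Finset.mem_Icc] at hj
  rw [Polynomial.eval_mul, Polynomial.eval_C, Polynomial.eval_pow, Polynomial.eval_X,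
    ← Complex.exp_nat_mul]
  have h0 : (((j + (N:ℤ)).toNat : ℕ) : ℂ) = (j : ℂ) + (N:ℂ) := by
    exact_mod_cast congrArg (Int.cast : ℤ → ℂ) (Int.toNat_of_nonneg (by omega))
  have h1 : (((j + (N:ℤ)).toNat : ℕ) : ℂ) * ((θ:ℂ) * Complex.I)
      = (N:ℂ)*θ*Complex.I + (j:ℂ)*θ*Complex.I := by rw [h0]; ring
  rw [h1, Complex.exp_add]; ring

lemma tp_zero_of_qp (N : ℕ) (c : ℤ → ℂ) (h : qp N c = 0) (θ : ℝ) : tp N c θ = 0 := by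
  have h1 := qp_eval N c θ
  rw [h, Polynomial.eval_zero] at h1
  have := Complex.exp_ne_zero ((N:ℂ) * θ * Complex.I)
  exact (mul_eq_zero.mp h1.symm).resolve_left this

lemma tp_sub (N : ℕ) (c1 c2 : ℤ → ℂ) (θ : ℝ) :
    tp N (fun j => c1 j - c2 j) θ = tp N c1 θ - tp N c2 θ := by
  simp [tp, sub_mul, Finset.sum_sub_distrib]

lemma tp_add (N : ℕ) (c1 c2 : ℤ → ℂ) (θ : ℝ) :
    tp N (fun j => c1 j + c2 j) θ = tp N c1 θ + tp N c2 θ := by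
  simp [tp, add_mul, Finset.sum_add_distrib]

lemma tp_delta (N : ℕ) (k : ℤ) (v : ℂ) (hk : k ∈ Finset.Icc (-(N:ℤ)) (N:ℤ)) (θ : ℝ) :
    tp N (fun j => if j = k then v else 0) θ = v * Complex.exp ((k:ℂ)*θ*Complex.I) := by
  simp [tp, ite_mul, Finset.sum_ite_eq', hk]


lemma ivt_sign {f : ℝ → ℝ} (hf : Continuous f) {x y : ℝ} (hxy : x < y)
    (h : f x * f y < 0) : ∃ z ∈ Set.Ioo x y, f z = 0 := by
  rcases mul_neg_iff.mp h with ⟨hx, hy⟩ | ⟨hx, hy⟩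
  · have : (0:ℝ) ∈ Set.Ioo (f y) (f x) := ⟨hy, hx⟩
    obtain ⟨z, hz, hfz⟩ := intermediate_value_Ioo' hxy.le hf.continuousOn this
    exact ⟨z, hz, hfz⟩
  · have : (0:ℝ) ∈ Set.Ioo (f x) (f y) := ⟨hx, hy⟩
    obtain ⟨z, hz, hfz⟩ := intermediate_value_Ioo hxy.le hf.continuousOn this
    exact ⟨z, hz, hfz⟩

lemma exp_window_inj {x y : ℝ} (h : |x - y| < 2*Real.pi)
    (he : Complex.exp ((x:ℂ)*Complex.I) = Complex.exp ((y:ℂ)*Complex.I)) : x = y := by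
  rw [Complex.exp_eq_exp_iff_exists_int] at he
  obtain ⟨k, hk⟩ := he
  have h2 : ((x : ℂ) - (y + k*(2*Real.pi))) * Complex.I = 0 := by
    linear_combination hk
  rcases mul_eq_zero.mp h2 with h3 | h3
  · have h4 : x = y + k*(2*Real.pi) := by
      have := sub_eq_zero.mp h3
      exact_mod_cast this
    have h5 : |(k:ℝ)| * (2*Real.pi) < 2*Real.pi := by
      have he : x - y = (k:ℝ) * (2*Real.pi) := by rw [h4]; ring
      calc |(k:ℝ)| * (2*Real.pi) = |x - y| := by
            rw [he, abs_mul, abs_of_nonneg (by positivity : (0:ℝ) ≤ 2*Real.pi)]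
        _ < 2*Real.pi := h
    have h6 : |(k:ℝ)| < 1 := by
      by_contra hc
      push_neg at hc
      nlinarith [Real.pi_pos]
    have h7 : k = 0 := by
      have h8 : |k| < 1 := by exact_mod_cast h6
      rcases abs_lt.mp h8 with ⟨h9, h10⟩
      omega
    rw [h4, h7] ; push_cast; ring
  · exact absurd h3 Complex.I_ne_zero

lemma coprime_XsubC {a b : ℂ} (h : a ≠ b) :
    IsCoprime (X - C a : Polynomial ℂ) (X - C b) := by
  have hne : b - a ≠ 0 := sub_ne_zero.mpr (Ne.symm h)
  refine ⟨C (b - a)⁻¹, -C (b - a)⁻¹, ?_⟩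
  have h1 : C (b-a)⁻¹ * (X - C a) + -C (b-a)⁻¹ * (X - C b)
      = C ((b-a)⁻¹ * (b - a)) := by
    simp only [C_mul, C_sub]; ring
  rw [h1, inv_mul_cancel₀ hne, C_1]

lemma double_root {Q : Polynomial ℂ} {u : ℂ} (h0 : Q.eval u = 0)
    (h1 : Q.derivative.eval u = 0) : (X - C u)^2 ∣ Q := by
  obtain ⟨Q₁, hQ₁⟩ := (dvd_iff_isRoot (p := Q) (a := u)).mpr h0
  rw [hQ₁, derivative_mul, derivative_X_sub_C] at h1
  simp only [eval_add, eval_mul, eval_one, one_mul, eval_sub, eval_X, eval_C, sub_self,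
    zero_mul, add_zero] at h1
  obtain ⟨Q₂, hQ₂⟩ := (dvd_iff_isRoot (p := Q₁) (a := u)).mpr h1
  exact ⟨Q₂, by rw [hQ₁, hQ₂]; ring⟩

lemma count_roots_contra {Q : Polynomial ℂ} (hQ : Q ≠ 0) (K : ℕ) (v : ℕ → ℂ) (u : ℂ)
    (hvinj : ∀ i, i < K → ∀ j, j < K → v i = v j → i = j)
    (hvu : ∀ i, i < K → v i ≠ u)
    (hvroot : ∀ i, i < K → (X - C (v i)) ∣ Q)
    (huroot : (X - C u)^2 ∣ Q) :
    K + 2 ≤ Q.natDegree := by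
  set f : ℕ → Polynomial ℂ := fun i => if i < K then X - C (v i) else (X - C u)^2 with hf
  have hmono : ∀ i, (f i).Monic := by
    intro i
    rw [hf]
    by_cases hi : i < K
    · simpa [hi] using monic_X_sub_C (v i)
    · simpa [hi] using (monic_X_sub_C u).pow 2
  have hdvd : ∀ i ∈ Finset.range (K+1), f i ∣ Q := by
    intro i hi
    rw [Finset.mem_range] at hi
    by_cases h : i < K
    · simpa [hf, h] using hvroot i h
    · simpa [hf, h] using huroot
  have hcop : (↑(Finset.range (K+1)) : Set ℕ).Pairwise (Function.onFun IsCoprime f) := by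
    intro i hi j hj hij
    simp only [Finset.coe_range, Set.mem_Iio] at hi hj
    have base : ∀ a b : ℕ, a < K+1 → b < K+1 → a ≠ b →
        ∃ x y : ℂ, x ≠ y ∧ f a = (X - C x)^(if a < K then 1 else 2) ∧
          f b = (X - C y)^(if b < K then 1 else 2) := by
      intro a b ha hb hab
      refine ⟨(if a < K then v a else u), (if b < K then v b else u), ?_, ?_, ?_⟩
      · by_cases h1 : a < K <;> by_cases h2 : b < K <;> simp [h1, h2]
        · intro he; exact hab (hvinj a h1 b h2 he)
        · exact hvu a h1
        · exact fun he => (hvu b h2) he.symm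
        · omega
      · by_cases h1 : a < K <;> simp [hf, h1]
      · by_cases h1 : b < K <;> simp [hf, h1]
    obtain ⟨x, y, hxy, hfx, hfy⟩ := base i j hi hj hij
    rw [Function.onFun, hfx, hfy]
    exact (coprime_XsubC hxy).pow
  have hproddvd : (∏ i ∈ Finset.range (K+1), f i) ∣ Q := Finset.prod_dvd_of_coprime hcop hdvd
  have hdegle := Polynomial.natDegree_le_of_dvd hproddvd hQ
  have hdegprod : (∏ i ∈ Finset.range (K+1), f i).natDegree = K + 2 := by
    rw [Polynomial.natDegree_prod _ _ (fun i _ => (hmono i).ne_zero)]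
    rw [Finset.sum_range_succ]
    have h1 : ∀ i ∈ Finset.range K, (f i).natDegree = 1 := by
      intro i hi
      rw [Finset.mem_range] at hi
      simp [hf, hi, natDegree_X_sub_C]
    rw [Finset.sum_congr rfl h1]
    have h2 : (f K).natDegree = 2 := by
      simp [hf, natDegree_pow, natDegree_X_sub_C]
    rw [h2]
    simp [Finset.sum_const, Finset.card_range]
  omega


lemma spike_form (A ψ : ℝ) : (A:ℂ) * Complex.exp ((ψ:ℂ)*Complex.I) / (2*Complex.I)
    = ((A * Real.sin ψ/2 : ℝ):ℂ) + ((-(A * Real.cos ψ)/2 : ℝ):ℂ)*Complex.I := by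
  rw [Complex.exp_mul_I, ← Complex.ofReal_cos, ← Complex.ofReal_sin]
  rw [div_eq_iff (by simp [Complex.I_ne_zero] : (2*Complex.I) ≠ 0)]
  push_cast
  linear_combination ((A:ℂ) * Complex.cos (ψ:ℂ)) * Complex.I_sq

lemma spike_sum (A ψ : ℝ) : (A:ℂ) * Complex.exp ((ψ:ℂ)*Complex.I) / (2*Complex.I)
    + (starRingEnd ℂ) ((A:ℂ) * Complex.exp ((ψ:ℂ)*Complex.I) / (2*Complex.I))
    = ((A * Real.sin ψ : ℝ):ℂ) := by
  rw [spike_form]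
  simp only [map_add, map_mul, Complex.conj_ofReal, Complex.conj_I]
  push_cast; ring

lemma spike_diff (A ψ : ℝ) : Complex.I * ((A:ℂ) * Complex.exp ((ψ:ℂ)*Complex.I) / (2*Complex.I))
    - Complex.I * (starRingEnd ℂ) ((A:ℂ) * Complex.exp ((ψ:ℂ)*Complex.I) / (2*Complex.I))
    = ((A * Real.cos ψ : ℝ):ℂ) := by
  rw [spike_form]
  simp only [map_add, map_mul, Complex.conj_ofReal, Complex.conj_I]
  push_cast
  linear_combination (-(A:ℂ) * Complex.cos (ψ:ℂ)) * Complex.I_sq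

set_option maxHeartbeats 1000000 in
lemma svdc (N : ℕ) (hN : 1 ≤ N) (c : ℤ → ℂ) (B : ℝ)
    (him : ∀ θ, (tp N c θ).im = 0) (hB : ∀ θ, |(tp N c θ).re| ≤ B) (θ₀ : ℝ) :
    ((tp N (dc c) θ₀).re)^2 + (N:ℝ)^2 * ((tp N c θ₀).re)^2 ≤ (N:ℝ)^2 * B^2 := by
  by_contra hcon
  push_neg at hcon
  set r : ℝ → ℝ := fun θ => (tp N c θ).re with hr
  set r' : ℝ → ℝ := fun θ => (tp N (dc c) θ).re with hr'
  have hcon' : (N:ℝ)^2 * B^2 < r' θ₀^2 + (N:ℝ)^2 * (r θ₀)^2 := hcon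
  have hNpos : (0:ℝ) < N := by exact_mod_cast hN
  have hB0 : 0 ≤ B := le_trans (abs_nonneg _) (hB 0)
  have hπ := Real.pi_pos
  set z : ℂ := ((r' θ₀ / N : ℝ) : ℂ) + ((r θ₀ : ℝ) : ℂ) * Complex.I with hz
  set A : ℝ := ‖z‖ with hA
  have hA0 : 0 ≤ A := norm_nonneg z
  have hA2 : (N:ℝ)^2 * A^2 = r' θ₀^2 + (N:ℝ)^2 * (r θ₀)^2 := by
    rw [hA, Complex.sq_norm, hz, Complex.normSq_add_mul_I]
    field_simp
  have hBA : B < A := by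
    by_contra hc
    push_neg at hc
    have hle : A^2 ≤ B^2 := pow_le_pow_left₀ hA0 hc 2
    have h2 : (N:ℝ)^2 * A^2 ≤ (N:ℝ)^2 * B^2 :=
      mul_le_mul_of_nonneg_left hle (sq_nonneg _)
    linarith [hA2 ▸ h2]
  have hApos : 0 < A := lt_of_le_of_lt hB0 hBA
  set φ : ℝ := Complex.arg z with hφ
  have hzeq : (A:ℂ) * Complex.exp ((φ:ℂ)*Complex.I) = z := Complex.norm_mul_exp_arg_mul_I z
  have hcos : A * Real.cos φ = r' θ₀ / N := by
    have h1 := congrArg Complex.re hzeq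
    simpa [hz, Complex.exp_mul_I, Complex.mul_re, Complex.cos_ofReal_re,
      Complex.sin_ofReal_re] using h1
  have hsin : A * Real.sin φ = r θ₀ := by
    have h1 := congrArg Complex.im hzeq
    simpa [hz, Complex.exp_mul_I, Complex.mul_im, Complex.cos_ofReal_re,
      Complex.sin_ofReal_re] using h1
  -- the comparison sinusoid
  set w : ℂ := (A:ℂ) * Complex.exp (((φ - N*θ₀ : ℝ):ℂ)*Complex.I) / (2*Complex.I) with hw
  set Sf : ℝ → ℝ := fun θ => A * Real.sin (N*(θ - θ₀) + φ) with hSf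
  set NZ : ℤ := (N:ℤ) with hNZ
  set negN : ℤ := -NZ with hnegN
  set cS : ℤ → ℂ := fun j => (if j = NZ then w else 0)
      + (if j = negN then (starRingEnd ℂ) w else 0) with hcS
  have hNmem : NZ ∈ Finset.Icc (-(N:ℤ)) (N:ℤ) := by
    simp only [Finset.mem_Icc, hNZ]; omega
  have hNmem' : negN ∈ Finset.Icc (-(N:ℤ)) (N:ℤ) := by
    simp only [Finset.mem_Icc, hnegN, hNZ]; omega
  have hW : ∀ θ : ℝ, w * Complex.exp ((NZ:ℂ)*θ*Complex.I)
      = (A:ℂ) * Complex.exp (((N*(θ - θ₀) + φ : ℝ):ℂ)*Complex.I) / (2*Complex.I) := by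
    intro θ
    rw [hw, div_mul_eq_mul_div, mul_assoc, ← Complex.exp_add]
    congr 2
    rw [hNZ]
    push_cast
    ring
  have hWc : ∀ θ : ℝ, (starRingEnd ℂ) w * Complex.exp ((negN:ℂ)*θ*Complex.I)
      = (starRingEnd ℂ) (w * Complex.exp ((NZ:ℂ)*θ*Complex.I)) := by
    intro θ
    rw [map_mul]
    congr 1
    rw [← Complex.exp_conj]
    congr 1
    simp only [map_mul, Complex.conj_I, map_intCast, Complex.conj_ofReal]
    rw [hnegN, hNZ]
    push_cast
    ring
  have htpS : ∀ θ, tp N cS θ = ((Sf θ : ℝ) : ℂ) := by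
    intro θ
    rw [hcS]
    rw [tp_add N _ _ θ, tp_delta N NZ w hNmem θ, tp_delta N negN _ hNmem' θ]
    rw [hWc θ, hW θ]
    exact spike_sum A _
  set cd : ℤ → ℂ := fun j => c j - cS j with hcd
  have htpd : ∀ θ, tp N cd θ = tp N c θ - ((Sf θ : ℝ) : ℂ) := by
    intro θ
    rw [hcd, tp_sub N c cS θ, htpS θ]
  set dre : ℝ → ℝ := fun θ => r θ - Sf θ with hdre0
  have hdre : ∀ θ, (tp N cd θ).re = dre θ := by
    intro θ; rw [htpd θ]; simp [hr, hdre0]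
  have hdim : ∀ θ, (tp N cd θ).im = 0 := by
    intro θ; rw [htpd θ]; simp [him θ]
  -- derivative coefficients of the sinusoid part
  set Sd : ℝ → ℝ := fun θ => N * (A * Real.cos (N*(θ - θ₀) + φ)) with hSd
  have htpdS : ∀ θ, tp N (dc cS) θ = ((Sd θ : ℝ) : ℂ) := by
    intro θ
    have hNne : NZ ≠ negN := by rw [hNZ, hnegN]; omega
    have hfun : dc cS = fun j => (if j = NZ then (NZ:ℂ)*Complex.I*w else 0)
        + (if j = negN then (negN:ℂ)*Complex.I*((starRingEnd ℂ) w) else 0) := by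
      funext j
      simp only [dc, hcS]
      by_cases h1 : j = NZ
      · subst h1
        simp [hNne]
      · by_cases h2 : j = negN
        · subst h2
          simp [h1]
        · simp [h1, h2]
    rw [hfun, tp_add N _ _ θ, tp_delta N NZ _ hNmem θ, tp_delta N negN _ hNmem' θ]
    have e1 : (NZ:ℂ)*Complex.I*w * Complex.exp ((NZ:ℂ)*θ*Complex.I)
        = ((N:ℝ):ℂ) * (Complex.I * (w * Complex.exp ((NZ:ℂ)*θ*Complex.I))) := by
      rw [hNZ]; push_cast; ring
    have e2 : (negN:ℂ)*Complex.I*((starRingEnd ℂ) w) * Complex.exp ((negN:ℂ)*θ*Complex.I)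
        = -(((N:ℝ):ℂ) * (Complex.I * ((starRingEnd ℂ) w * Complex.exp ((negN:ℂ)*θ*Complex.I)))) := by
      rw [hnegN, hNZ]; push_cast; ring
    rw [e1, e2, hWc θ, hW θ, ← sub_eq_add_neg, ← mul_sub, spike_diff A _]
    rw [hSd]
    push_cast
    ring
  have hdcd : ∀ θ, tp N (dc cd) θ = tp N (dc c) θ - ((Sd θ : ℝ) : ℂ) := by
    intro θ
    have hfun : dc cd = fun j => dc c j - dc cS j := by
      funext j; simp only [dc, hcd]; ring
    rw [hfun, tp_sub N _ _ θ, htpdS θ]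
  have hdcre : ∀ θ, (tp N (dc cd) θ).re = r' θ - Sd θ := by
    intro θ; rw [hdcd θ]; simp [hr']
  have hdcim : ∀ θ, (tp N (dc cd) θ).im = 0 := by
    intro θ; rw [hdcd θ]; simp [tp_im_deriv N c him θ]
  -- values at θ₀
  have hd0 : dre θ₀ = 0 := by
    show r θ₀ - A * Real.sin ((N:ℝ)*(θ₀ - θ₀) + φ) = 0
    rw [show (N:ℝ)*(θ₀-θ₀)+φ = φ by ring, hsin, sub_self]
  have hd'0 : r' θ₀ - Sd θ₀ = 0 := by
    show r' θ₀ - (N:ℝ) * (A * Real.cos ((N:ℝ)*(θ₀ - θ₀) + φ)) = 0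
    rw [show (N:ℝ)*(θ₀-θ₀)+φ = φ by ring, hcos]
    field_simp
    ring
  have htpd0 : tp N cd θ₀ = 0 := by
    apply Complex.ext
    · rw [hdre θ₀, hd0]; rfl
    · rw [hdim θ₀]; rfl
  have htpdc0 : tp N (dc cd) θ₀ = 0 := by
    apply Complex.ext
    · rw [hdcre θ₀, hd'0]; rfl
    · rw [hdcim θ₀]; rfl
  -- the grid
  set p : ℤ → ℝ := fun k => θ₀ + (Real.pi/2 + k*Real.pi - φ)/N with hpdef
  have hψp : ∀ k : ℤ, (N:ℝ)*(p k - θ₀) + φ = Real.pi/2 + k*Real.pi := by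
    intro k
    show (N:ℝ)*((θ₀ + (Real.pi/2 + k*Real.pi - φ)/N) - θ₀) + φ = _
    field_simp
    ring
  have hSp0 : Sf (p 0) = A := by
    show A * Real.sin ((N:ℝ)*(p 0 - θ₀) + φ) = A
    rw [hψp 0]
    norm_num [Real.sin_pi_div_two]
  have hSalt : ∀ k : ℤ, Sf (p (k+1)) = -Sf (p k) := by
    intro k
    show A * Real.sin ((N:ℝ)*(p (k+1) - θ₀) + φ) = -(A * Real.sin ((N:ℝ)*(p k - θ₀) + φ))
    rw [hψp, hψp]
    have h1 : Real.pi/2 + ((k+1 : ℤ):ℝ)*Real.pi = (Real.pi/2 + (k:ℝ)*Real.pi) + Real.pi := by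
      push_cast; ring
    rw [h1, Real.sin_add_pi]; ring
  have hSsq : ∀ k : ℤ, (Sf (p k))^2 = A^2 := by
    intro k
    induction k using Int.induction_on with
    | zero => rw [hSp0]
    | succ i ih => rw [hSalt i, neg_sq]; exact ih
    | pred i ih =>
        have h3 := hSalt (-i-1)
        rw [show (-i-1+1 : ℤ) = -i by ring] at h3
        rw [← neg_sq, ← h3]
        exact ih
  have habsS : ∀ k : ℤ, |Sf (p k)| = A := by
    intro k; rw [← Real.sqrt_sq_eq_abs, hSsq k, Real.sqrt_sq hA0]
  have hdSneg : ∀ k : ℤ, dre (p k) * Sf (p k) < 0 := by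
    intro k
    have h1 : r (p k) * Sf (p k) ≤ B * A := by
      calc r (p k) * Sf (p k) ≤ |r (p k) * Sf (p k)| := le_abs_self _
        _ = |r (p k)| * |Sf (p k)| := abs_mul _ _
        _ ≤ B * A := by rw [habsS k]; exact mul_le_mul_of_nonneg_right (hB (p k)) hA0
    have h2 : dre (p k) * Sf (p k) = r (p k) * Sf (p k) - (Sf (p k))^2 := by
      show (r (p k) - Sf (p k)) * Sf (p k) = _
      ring
    rw [h2, hSsq k]
    nlinarith
  have hdne : ∀ k : ℤ, dre (p k) ≠ 0 := by
    intro k hk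
    have h := hdSneg k
    rw [hk, zero_mul] at h
    exact lt_irrefl 0 h
  have hconsec : ∀ k : ℤ, dre (p k) * dre (p (k+1)) < 0 := by
    intro k
    have h1 := hdSneg k
    have h2 := hdSneg (k+1)
    rw [hSalt k] at h2
    nlinarith [mul_pos_of_neg_of_neg h1 h2, hSsq k, mul_pos hApos hApos]
  have hpmono : ∀ k l : ℤ, k < l → p k < p l := by
    intro k l hkl
    show θ₀ + (Real.pi/2 + (k:ℝ)*Real.pi - φ)/N < θ₀ + (Real.pi/2 + (l:ℝ)*Real.pi - φ)/N
    have h1 : ((k:ℝ)) * Real.pi < ((l:ℝ)) * Real.pi := by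
      apply mul_lt_mul_of_pos_right _ hπ
      exact_mod_cast hkl
    have h2 : (Real.pi/2 + (k:ℝ)*Real.pi - φ) < (Real.pi/2 + (l:ℝ)*Real.pi - φ) := by linarith
    have h3 := (div_lt_div_iff_of_pos_right hNpos).mpr h2
    linarith
  have hpmono' : ∀ k l : ℤ, k ≤ l → p k ≤ p l := by
    intro k l h
    rcases eq_or_lt_of_le h with rfl|h
    · exact le_rfl
    · exact (hpmono _ _ h).le
  set m : ℤ := ⌊(φ - Real.pi/2)/Real.pi⌋ with hm
  have hm1 : p m ≤ θ₀ := by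
    show θ₀ + (Real.pi/2 + (m:ℝ)*Real.pi - φ)/N ≤ θ₀
    have h1 : (m:ℝ) ≤ (φ - Real.pi/2)/Real.pi := Int.floor_le _
    have h2 : (m:ℝ)*Real.pi ≤ φ - Real.pi/2 := (le_div_iff₀ hπ).mp h1
    have h3 : Real.pi/2 + (m:ℝ)*Real.pi - φ ≤ 0 := by linarith
    have h4 : (Real.pi/2 + (m:ℝ)*Real.pi - φ)/N ≤ 0 :=
      div_nonpos_iff.mpr (Or.inr ⟨h3, hNpos.le⟩)
    linarith
  have hm2 : θ₀ < p (m+1) := by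
    show θ₀ < θ₀ + (Real.pi/2 + ((m+1:ℤ):ℝ)*Real.pi - φ)/N
    have h1 : (φ - Real.pi/2)/Real.pi < (m:ℝ) + 1 := Int.lt_floor_add_one _
    have h2 : φ - Real.pi/2 < ((m:ℝ)+1)*Real.pi := by
      rw [div_lt_iff₀ hπ] at h1; linarith
    have h3 : 0 < Real.pi/2 + ((m:ℝ)+1)*Real.pi - φ := by linarith
    have h4 : 0 < (Real.pi/2 + ((m:ℝ)+1)*Real.pi - φ)/N := div_pos h3 hNpos
    push_cast
    linarith
  have hm1' : p m < θ₀ := lt_of_le_of_ne hm1 (fun he => hdne m (by rw [he, hd0]))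
  have hcont : Continuous dre := by
    rw [hdre0]
    apply Continuous.sub
    · exact (Complex.continuous_re.comp (continuous_tp N c))
    · apply Continuous.mul continuous_const
      apply Real.continuous_sin.comp
      exact (continuous_const.mul (continuous_id.sub continuous_const)).add continuous_const
  have hzeros : ∀ i : ℕ, ∃ x, x ∈ Set.Ioo (p (m+1+i)) (p (m+1+i+1)) ∧ dre x = 0 := by
    intro i
    obtain ⟨x, hx1, hx2⟩ := ivt_sign hcont (hpmono _ _ (by omega)) (hconsec (m+1+i))
    exact ⟨x, hx1, hx2⟩
  choose q hqmem hqzero using hzeros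
  have hwindow : p (m + 2*N) = p m + 2*Real.pi := by
    show θ₀ + (Real.pi/2 + ((m+2*N:ℤ):ℝ)*Real.pi - φ)/N = θ₀ + (Real.pi/2 + (m:ℝ)*Real.pi - φ)/N + 2*Real.pi
    push_cast
    field_simp
    ring
  have hq_ub : ∀ i : ℕ, (i:ℤ) ≤ 2*N - 2 → q i < p m + 2*Real.pi := by
    intro i hi
    have h1 : (q i) < p (m+1+i+1) := (hqmem i).2
    have h2 : p (m+1+i+1) ≤ p (m+2*N) := hpmono' _ _ (by omega)
    rw [hwindow] at h2; linarith
  set u : ℂ := Complex.exp ((θ₀:ℂ)*Complex.I) with hu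
  set E : ℝ → ℂ := fun x => Complex.exp ((x:ℂ)*Complex.I) with hE
  have hQne : qp N cd ≠ 0 := by
    intro h0
    have h1 := tp_zero_of_qp N cd h0 (p m)
    have h2 : dre (p m) = 0 := by rw [← hdre (p m), h1]; rfl
    exact hdne m h2
  have hQu : (qp N cd).eval u = 0 := by
    rw [hu, qp_eval N cd θ₀, htpd0, mul_zero]
  have hQderiv : (qp N cd).derivative.eval u = 0 := by
    have hinner : HasDerivAt (fun z : ℂ => Complex.exp (z*Complex.I))
        (Complex.exp (((θ₀:ℂ))*Complex.I) * Complex.I) ((θ₀:ℂ)) := by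
      have hi2 : HasDerivAt (fun z : ℂ => z * Complex.I) Complex.I ((θ₀:ℂ)) := by
        simpa using (hasDerivAt_id ((θ₀:ℂ))).mul_const Complex.I
      exact (Complex.hasDerivAt_exp (((θ₀:ℂ))*Complex.I)).comp ((θ₀:ℂ)) hi2
    have houter := Polynomial.hasDerivAt (qp N cd) (Complex.exp (((θ₀:ℂ))*Complex.I))
    have hcomp := (houter.comp ((θ₀:ℂ)) hinner).comp_ofReal
    have hc1 : HasDerivAt (fun t : ℝ => (qp N cd).eval (Complex.exp ((t:ℂ)*Complex.I)))
        ((qp N cd).derivative.eval u * (u * Complex.I)) θ₀ := by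
      rw [hu]
      exact hcomp
    have h1' : HasDerivAt (fun t : ℝ => Complex.exp (((N:ℤ):ℂ)*t*Complex.I))
        (((N:ℤ):ℂ)*Complex.I*Complex.exp (((N:ℤ):ℂ)*θ₀*Complex.I)) θ₀ := by
      have h := hasDerivAt_term (N:ℤ) 1 θ₀
      simpa using h
    have hc2 : HasDerivAt (fun t : ℝ => (qp N cd).eval (Complex.exp ((t:ℂ)*Complex.I))) 0 θ₀ := by
      have hfe : (fun t : ℝ => (qp N cd).eval (Complex.exp ((t:ℂ)*Complex.I)))
          = fun t : ℝ => Complex.exp (((N:ℤ):ℂ)*t*Complex.I) * tp N cd t := by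
        funext t
        rw [qp_eval N cd t]
        norm_num
      rw [hfe]
      have h3 := h1'.mul (hasDerivAt_tp N cd θ₀)
      rw [htpd0, htpdc0] at h3
      simpa [Pi.mul_def] using h3
    have huniq := hc1.unique hc2
    have hune : u * Complex.I ≠ 0 := mul_ne_zero (Complex.exp_ne_zero _) Complex.I_ne_zero
    exact (mul_eq_zero.mp huniq).resolve_right hune
  have hu2 : (X - Polynomial.C u)^2 ∣ qp N cd := double_root hQu hQderiv
  have hqroot : ∀ i : ℕ, (X - Polynomial.C (E (q i))) ∣ qp N cd := by
    intro i
    rw [dvd_iff_isRoot]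
    show (qp N cd).eval (E (q i)) = 0
    rw [hE]
    show (qp N cd).eval (Complex.exp (((q i : ℝ):ℂ)*Complex.I)) = 0
    rw [qp_eval N cd (q i)]
    have h4 : tp N cd (q i) = 0 := by
      apply Complex.ext
      · rw [hdre, hqzero i]; rfl
      · rw [hdim]; rfl
    rw [h4, mul_zero]
  have hqwin : ∀ i : ℕ, (i:ℤ) ≤ 2*N-2 → q i ∈ Set.Ioo (p m) (p m + 2*Real.pi) := by
    intro i hi
    constructor
    · have h1 := (hqmem i).1
      have h5 := hpmono' (m+1) (m+1+i) (by omega)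
      have h6 := hpmono m (m+1) (by omega)
      linarith
    · exact hq_ub i hi
  have hθwin : θ₀ ∈ Set.Ioo (p m) (p m + 2*Real.pi) := by
    constructor
    · exact hm1'
    · have h5 := hpmono' (m+1) (m+2*N) (by omega)
      rw [hwindow] at h5
      linarith [hm2]
  have hwininj : ∀ x y : ℝ, x ∈ Set.Ioo (p m) (p m + 2*Real.pi) →
      y ∈ Set.Ioo (p m) (p m+2*Real.pi) → E x = E y → x = y := by
    intro x y hx hy hexy
    apply exp_window_inj _ hexy
    rw [abs_sub_lt_iff]
    obtain ⟨hx1, hx2⟩ := hx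
    obtain ⟨hy1, hy2⟩ := hy
    constructor <;> linarith
  have hqij : ∀ i j : ℕ, i < j → (j:ℤ) ≤ 2*N-2 → q i < q j := by
    intro i j hij hj
    have h1 : q i < p (m+1+i+1) := (hqmem i).2
    have h2 : p (m+1+i+1) ≤ p (m+1+j) := hpmono' _ _ (by omega)
    have h3 : p (m+1+j) < q j := (hqmem j).1
    linarith
  have hθq : ∀ i : ℕ, θ₀ < q i := by
    intro i
    have h1 := (hqmem i).1
    have h2 := hpmono' (m+1) (m+1+i) (by omega)
    linarith [hm2]
  set K : ℕ := 2*N - 1 with hK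
  have hvinj : ∀ i, i < K → ∀ j, j < K → E (q i) = E (q j) → i = j := by
    intro i hi j hj he
    have hwi := hqwin i (by omega)
    have hwj := hqwin j (by omega)
    have heq := hwininj _ _ hwi hwj he
    by_contra hne
    rcases lt_or_gt_of_ne hne with h|h
    · exact absurd heq (ne_of_lt (hqij i j h (by omega)))
    · exact absurd heq.symm (ne_of_lt (hqij j i h (by omega)))
  have hvu : ∀ i, i < K → E (q i) ≠ u := by
    intro i hi he
    have hwi := hqwin i (by omega)
    have heq := hwininj _ _ hwi hθwin (by rw [he, hu, hE])
    exact absurd heq (ne_of_gt (hθq i))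
  have hcount := count_roots_contra hQne K (fun i => E (q i)) u hvinj hvu
    (fun i _ => hqroot i) hu2
  have hdeg := qp_natDegree_le N cd
  omega

lemma tp_smul (N : ℕ) (a : ℂ) (c : ℤ → ℂ) (θ : ℝ) :
    tp N (fun j => a * c j) θ = a * tp N c θ := by
  simp [tp, Finset.mul_sum, mul_assoc]

set_option maxHeartbeats 1000000 in
lemma travel (N : ℕ) (hN : 1 ≤ N) (c : ℤ → ℂ) (B : ℝ) (hBpos : 0 < B)
    (him : ∀ θ, (tp N c θ).im = 0)
    (h0le : ∀ θ, 0 ≤ (tp N c θ).re) (hleB : ∀ θ, (tp N c θ).re ≤ B)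
    (hstart : (tp N c 0).re = B) (β : ℝ) (hβ : 0 < β) (hend : (tp N c β).re = 0) :
    Real.pi/N ≤ β ∧ (β = Real.pi/N →
      ∀ θ, (tp N c θ).re = B*(1 + Real.cos (N*θ))/2) := by
  have hNpos : (0:ℝ) < N := by exact_mod_cast hN
  have hπ := Real.pi_pos
  have h0mem : (0:ℤ) ∈ Finset.Icc (-(N:ℤ)) (N:ℤ) := by
    simp only [Finset.mem_Icc]; omega
  set c2 : ℤ → ℂ := fun j => 2 * c j - (if j = (0:ℤ) then (B:ℂ) else 0) with hc2
  have htp2 : ∀ θ, tp N c2 θ = 2 * tp N c θ - (B:ℂ) := by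
    intro θ
    rw [hc2, tp_sub N _ _ θ, tp_smul N 2 c θ, tp_delta N 0 (B:ℂ) h0mem θ]
    norm_num
  have hs : ∀ θ, (tp N c2 θ).re = 2 * (tp N c θ).re - B := by
    intro θ; rw [htp2 θ]; simp
  have him2 : ∀ θ, (tp N c2 θ).im = 0 := by
    intro θ; rw [htp2 θ]; simp [him θ]
  have hsabs : ∀ θ, |(tp N c2 θ).re| ≤ B := by
    intro θ
    rw [hs θ, abs_le]
    constructor
    · linarith [h0le θ]
    · linarith [hleB θ]
  have hsvdc := svdc N hN c2 B him2 hsabs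
  set F : ℝ → ℝ := fun θ => Real.arccos ((tp N c2 θ).re / B) with hF
  have hFcont : Continuous F := by
    apply Real.continuous_arccos.comp
    exact (Complex.continuous_re.comp (continuous_tp N c2)).div_const B
  have hF0 : F 0 = 0 := by
    show Real.arccos ((tp N c2 0).re / B) = 0
    rw [hs 0, hstart]
    rw [show 2*B - B = B by ring, div_self hBpos.ne']
    exact Real.arccos_one
  have hFβ : F β = Real.pi := by
    show Real.arccos ((tp N c2 β).re / B) = Real.pi
    rw [hs β, hend]
    rw [show 2*(0:ℝ) - B = -B by ring, neg_div, div_self hBpos.ne']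
    exact Real.arccos_neg_one
  -- first and last passage points
  set T : Set ℝ := Set.Icc 0 β ∩ F ⁻¹' {Real.pi} with hT
  have hTclosed : IsClosed T := IsClosed.inter isClosed_Icc (isClosed_singleton.preimage hFcont)
  have hTne : T.Nonempty := ⟨β, ⟨hβ.le, le_rfl⟩, hFβ⟩
  have hTbdd : BddBelow T := ⟨0, fun x hx => hx.1.1⟩
  set b : ℝ := sInf T with hbdef
  have hbmem : b ∈ T := hTclosed.csInf_mem hTne hTbdd
  have hbIcc : b ∈ Set.Icc 0 β := hbmem.1
  have hFb : F b = Real.pi := hbmem.2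
  have hb0 : 0 < b := by
    rcases eq_or_lt_of_le hbIcc.1 with h|h
    · exfalso
      have h2 : F b = 0 := by rw [← h]; exact hF0
      rw [hFb] at h2
      exact Real.pi_ne_zero h2
    · exact h
  set S : Set ℝ := Set.Icc 0 b ∩ F ⁻¹' {0} with hS
  have hSclosed : IsClosed S := IsClosed.inter isClosed_Icc (isClosed_singleton.preimage hFcont)
  have hSne : S.Nonempty := ⟨0, ⟨le_rfl, hb0.le⟩, hF0⟩
  have hSbdd : BddAbove S := ⟨b, fun x hx => hx.1.2⟩
  set a : ℝ := sSup S with hadef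
  have hamem : a ∈ S := hSclosed.csSup_mem hSne hSbdd
  have haIcc : a ∈ Set.Icc 0 b := hamem.1
  have hFa : F a = 0 := hamem.2
  have hab : a < b := by
    rcases eq_or_lt_of_le haIcc.2 with h|h
    · exfalso; rw [h] at hFa; rw [hFa] at hFb; exact Real.pi_ne_zero hFb.symm
    · exact h
  have hmid : ∀ x, x ∈ Set.Ioo a b → F x ≠ 0 ∧ F x ≠ Real.pi := by
    intro x hx
    constructor
    · intro h0
      have hxS : x ∈ S := ⟨⟨le_trans haIcc.1 hx.1.le, hx.2.le⟩, h0⟩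
      exact absurd (le_csSup hSbdd hxS) (not_le.mpr hx.1)
    · intro h0
      have hxT : x ∈ T := ⟨⟨le_trans haIcc.1 hx.1.le, le_trans hx.2.le hbIcc.2⟩, h0⟩
      exact absurd (csInf_le hTbdd hxT) (not_le.mpr hx.2)
  have hstrict : ∀ x, x ∈ Set.Ioo a b → |(tp N c2 x).re / B| < 1 := by
    intro x hx
    obtain ⟨hne0, hneπ⟩ := hmid x hx
    have h1 : |(tp N c2 x).re / B| ≤ 1 := by
      rw [abs_div, abs_of_pos hBpos, div_le_one hBpos]
      exact hsabs x
    rcases eq_or_lt_of_le h1 with h|h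
    · exfalso
      rcases abs_eq (by norm_num : (0:ℝ) ≤ 1) |>.mp h with h2|h2
      · apply hne0
        show Real.arccos _ = 0
        rw [h2]; exact Real.arccos_one
      · apply hneπ
        show Real.arccos _ = Real.pi
        rw [h2]; exact Real.arccos_neg_one
    · exact h
  have hFderiv : ∀ x, x ∈ Set.Ioo a b → ∃ d, HasDerivAt F d x ∧ |d| ≤ N := by
    intro x hx
    set sd : ℝ := (tp N (dc c2) x).re with hsd
    set sv : ℝ := (tp N c2 x).re with hsv
    have hu : HasDerivAt (fun θ => (tp N c2 θ).re / B) (sd / B) x :=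
      (hasDerivAt_tp_re N c2 x).div_const B
    set y : ℝ := sv / B with hy
    have hylt : |y| < 1 := hstrict x hx
    have hy1 : y ≠ -1 := by
      intro h; rw [h] at hylt; simp at hylt
    have hy2 : y ≠ 1 := by
      intro h; rw [h] at hylt; simp at hylt
    have harc := Real.hasDerivAt_arccos hy1 hy2
    have hcomp := harc.comp x hu
    refine ⟨_, hcomp, ?_⟩
    have hsq : sd^2 ≤ (N:ℝ)^2 * (B^2 - sv^2) := by
      have h9 := hsvdc x
      nlinarith [h9]
    have hy2' : y^2 < 1 := by
      rw [← sq_abs]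
      nlinarith [abs_nonneg y]
    have hypos : 0 < 1 - y^2 := by linarith
    have hsqrtpos : 0 < Real.sqrt (1 - y^2) := Real.sqrt_pos.mpr hypos
    have hsvB : 0 ≤ B^2 - sv^2 := by
      have h8 := hsabs x
      rw [← hsv] at h8
      nlinarith [h8, abs_nonneg sv, sq_abs sv]
    have hyy : 1 - y^2 = (B^2 - sv^2)/B^2 := by
      rw [hy]; field_simp
    have hBs : B * Real.sqrt (1 - y^2) = Real.sqrt (B^2 - sv^2) := by
      rw [hyy, Real.sqrt_div hsvB, Real.sqrt_sq hBpos.le]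
      field_simp
    have hs'le : |sd| ≤ (N:ℝ) * Real.sqrt (B^2 - sv^2) := by
      have h2 : Real.sqrt (sd^2) ≤ Real.sqrt ((N:ℝ)^2 * (B^2 - sv^2)) := Real.sqrt_le_sqrt hsq
      rw [Real.sqrt_sq_eq_abs, Real.sqrt_mul (by positivity) _, Real.sqrt_sq hNpos.le] at h2
      exact h2
    have habs : |-(1 / Real.sqrt (1 - y ^ 2)) * (sd/B)| = |sd| / (B * Real.sqrt (1 - y^2)) := by
      rw [abs_mul, abs_neg, abs_div, abs_one, abs_div, abs_of_pos hsqrtpos, abs_of_pos hBpos,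
        div_mul_div_comm, one_mul, mul_comm (Real.sqrt (1 - y^2)) B]
    rw [habs, div_le_iff₀ (by positivity)]
    calc |sd| ≤ (N:ℝ) * Real.sqrt (B^2 - sv^2) := hs'le
      _ = (N:ℝ) * (B * Real.sqrt (1 - y^2)) := by rw [hBs]
  have hGmono : MonotoneOn (fun x => (N:ℝ)*x - F x) (Set.Icc a b) := by
    apply monotoneOn_of_deriv_nonneg (convex_Icc a b)
    · exact ((continuous_const.mul continuous_id).sub hFcont).continuousOn
    · intro x hx
      rw [interior_Icc] at hx
      obtain ⟨d, hd, _⟩ := hFderiv x hx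
      exact (((hasDerivAt_id x).const_mul (N:ℝ)).sub hd).differentiableAt.differentiableWithinAt
    · intro x hx
      rw [interior_Icc] at hx
      obtain ⟨d, hd, hdb⟩ := hFderiv x hx
      have hG : HasDerivAt (fun x => (N:ℝ)*x - F x) ((N:ℝ)*1 - d) x :=
        (((hasDerivAt_id x).const_mul (N:ℝ))).sub hd
      rw [hG.deriv]
      have := (abs_le.mp hdb).2
      linarith
  have hmem_a : a ∈ Set.Icc a b := ⟨le_rfl, hab.le⟩
  have hmem_b : b ∈ Set.Icc a b := ⟨hab.le, le_rfl⟩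
  have hGa : (N:ℝ)*a - F a ≤ (N:ℝ)*b - F b := hGmono hmem_a hmem_b hab.le
  have hπle : Real.pi ≤ (N:ℝ)*(b - a) := by
    rw [hFa, hFb] at hGa
    have hexp : (N:ℝ)*(b-a) = (N:ℝ)*b - (N:ℝ)*a := by ring
    linarith
  have hmain : Real.pi / N ≤ β := by
    rw [div_le_iff₀ hNpos]
    have h2 : b - a ≤ β := by
      have := haIcc.1; have := hbIcc.2; linarith
    have h1 : (N:ℝ)*(b-a) ≤ (N:ℝ)*β := mul_le_mul_of_nonneg_left h2 hNpos.le
    have h3 : (N:ℝ)*β = β*(N:ℝ) := mul_comm _ _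
    linarith
  refine ⟨hmain, ?_⟩
  intro heq
  have hNβ : (N:ℝ)*β = Real.pi := by
    rw [heq]; field_simp
  have h2 : b - a ≤ β := by
    have := haIcc.1; have := hbIcc.2; linarith
  have h3 : (N:ℝ)*(b-a) ≤ (N:ℝ)*β := mul_le_mul_of_nonneg_left h2 hNpos.le
  have h4 : b - a = β := by nlinarith [hπle, hNβ]
  have ha0' : a = 0 := by
    have := haIcc.1; have := hbIcc.2; linarith
  have hbβ' : b = β := by
    have := haIcc.1; have := hbIcc.2; linarith
  have hFlin : ∀ x, x ∈ Set.Icc (0:ℝ) β → F x = (N:ℝ)*x := by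
    intro x hx
    have hx' : x ∈ Set.Icc a b := by rw [ha0', hbβ']; exact hx
    have h1 : (N:ℝ)*a - F a ≤ (N:ℝ)*x - F x := hGmono hmem_a hx' (by rw [ha0']; exact hx.1)
    have h2' : (N:ℝ)*x - F x ≤ (N:ℝ)*b - F b := hGmono hx' hmem_b (by rw [hbβ']; exact hx.2)
    have e1 : (N:ℝ)*a - F a = 0 := by rw [hFa, ha0']; ring
    have e2 : (N:ℝ)*b - F b = 0 := by rw [hFb, hbβ']; linarith [hNβ]
    linarith
  have hcosval : ∀ x, x ∈ Set.Icc (0:ℝ) β → (tp N c2 x).re = B * Real.cos ((N:ℝ)*x) := by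
    intro x hx
    have h1 : Real.arccos ((tp N c2 x).re / B) = (N:ℝ)*x := hFlin x hx
    have hcc : Real.cos (Real.arccos ((tp N c2 x).re / B)) = (tp N c2 x).re / B := by
      apply Real.cos_arccos
      · rw [le_div_iff₀ hBpos]
        have := (abs_le.mp (hsabs x)).1
        linarith
      · rw [div_le_one hBpos]
        exact (abs_le.mp (hsabs x)).2
    rw [h1] at hcc
    field_simp at hcc
    linarith
  set cB : ℤ → ℂ := fun j => (if j = (N:ℤ) then (B/2:ℂ) else 0)
      + (if j = -(N:ℤ) then (B/2:ℂ) else 0) with hcB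
  have hNmem : ((N:ℤ)) ∈ Finset.Icc (-(N:ℤ)) (N:ℤ) := by simp only [Finset.mem_Icc]; omega
  have hNmem' : (-(N:ℤ)) ∈ Finset.Icc (-(N:ℤ)) (N:ℤ) := by simp only [Finset.mem_Icc]; omega
  have htpB : ∀ θ, tp N cB θ = ((B * Real.cos ((N:ℝ)*θ) : ℝ) : ℂ) := by
    intro θ
    rw [hcB, tp_add N _ _ θ, tp_delta N _ _ hNmem θ, tp_delta N _ _ hNmem' θ]
    have harg1 : ((((N:ℤ)):ℂ))*θ*Complex.I = ((((N:ℝ)*θ : ℝ)):ℂ) * Complex.I := by push_cast; ring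
    have harg2 : ((((-(N:ℤ)):ℤ):ℂ))*θ*Complex.I = -(((((N:ℝ)*θ : ℝ)):ℂ)) * Complex.I := by push_cast; ring
    rw [harg1, harg2]
    have hfact : (B/2:ℂ) * Complex.exp (((((N:ℝ)*θ:ℝ)):ℂ)*Complex.I)
        + (B/2:ℂ) * Complex.exp (-((((N:ℝ)*θ:ℝ)):ℂ) * Complex.I)
        = (B/2:ℂ) * (2 * Complex.cos ((((N:ℝ)*θ:ℝ)):ℂ)) := by
      rw [Complex.two_cos]; ring
    rw [hfact, ← Complex.ofReal_cos]
    push_cast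
    ring
  set e : ℤ → ℂ := fun j => c2 j - cB j with he
  have htpe : ∀ θ, tp N e θ = tp N c2 θ - ((B * Real.cos ((N:ℝ)*θ) : ℝ) : ℂ) := by
    intro θ; rw [he, tp_sub N _ _ θ, htpB θ]
  have hzero : ∀ x, x ∈ Set.Icc (0:ℝ) β → tp N e x = 0 := by
    intro x hx
    rw [htpe x]
    apply Complex.ext
    · simp only [Complex.sub_re, Complex.ofReal_re, Complex.zero_re, hcosval x hx, sub_self]
    · simp only [Complex.sub_im, Complex.ofReal_im, Complex.zero_im, him2 x, sub_zero]
  have hqpe : qp N e = 0 := by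
    apply Polynomial.eq_zero_of_infinite_isRoot
    have hβπ : β ≤ Real.pi := by
      rw [heq]
      exact div_le_self hπ.le (by exact_mod_cast hN)
    have hsub : (fun x : ℝ => Complex.exp ((x:ℂ)*Complex.I)) '' (Set.Icc 0 β)
        ⊆ {x | (qp N e).IsRoot x} := by
      rintro _ ⟨x, hx, rfl⟩
      show (qp N e).eval _ = 0
      rw [qp_eval N e x, hzero x hx, mul_zero]
    apply Set.Infinite.mono hsub
    apply Set.Infinite.image
    · intro x hx y hy hxy
      apply exp_window_inj _ hxy
      rw [abs_sub_lt_iff]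
      obtain ⟨hx1, hx2⟩ := hx
      obtain ⟨hy1, hy2⟩ := hy
      constructor <;> linarith
    · exact Set.Icc_infinite hβ
  have hzall : ∀ θ, tp N e θ = 0 := tp_zero_of_qp N e hqpe
  intro θ
  have h1 := hzall θ
  rw [htpe θ] at h1
  have h2' : tp N c2 θ = ((B * Real.cos ((N:ℝ)*θ) : ℝ) : ℂ) := sub_eq_zero.mp h1
  have h3 := congrArg Complex.re h2'
  rw [hs θ] at h3
  simp only [Complex.ofReal_re] at h3
  linarith

lemma tp_reflect (N : ℕ) (c : ℤ → ℂ) (θ : ℝ) :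
    tp N (fun j => c (-j)) θ = tp N c (-θ) := by
  rw [tp, tp]
  apply Finset.sum_equiv (Equiv.neg ℤ)
  · intro j
    simp only [Finset.mem_Icc, Equiv.neg_apply]
    omega
  · intro j hj
    simp only [Equiv.neg_apply, neg_neg]
    congr 1
    push_cast
    ring

lemma poly_rep (P : Polynomial ℂ) (n : ℕ) (hdeg : P.natDegree = n) :
    ∃ c : ℤ → ℂ, ∀ θ : ℝ,
      tp n c θ = ((‖P.eval (Complex.exp ((θ:ℂ)*Complex.I))‖^2 : ℝ) : ℂ) := by
  refine ⟨fun m => ∑ kl ∈ Finset.range (n+1) ×ˢ Finset.range (n+1),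
      (if ((kl.1:ℤ) - kl.2) = m then P.coeff kl.1 * (starRingEnd ℂ) (P.coeff kl.2) else 0),
    fun θ => ?_⟩
  have heval : P.eval (Complex.exp ((θ:ℂ)*Complex.I))
      = ∑ k ∈ Finset.range (n+1), P.coeff k * Complex.exp (((k:ℤ):ℂ)*θ*Complex.I) := by
    rw [Polynomial.eval_eq_sum_range, hdeg]
    apply Finset.sum_congr rfl
    intro k hk
    congr 1
    rw [← Complex.exp_nat_mul]
    congr 1
    push_cast
    ring
  rw [heval]
  have hmulconj : ∀ z : ℂ, z * (starRingEnd ℂ) z = ((‖z‖^2 : ℝ):ℂ) := by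
    intro z
    rw [Complex.mul_conj]
    simp [Complex.normSq_eq_norm_sq]
  rw [← hmulconj]
  rw [tp, map_sum, Finset.sum_mul_sum]
  have hL : ∀ kl : ℕ × ℕ, kl ∈ Finset.range (n+1) ×ˢ Finset.range (n+1) →
      (∑ j ∈ Finset.Icc (-(n:ℤ)) (n:ℤ),
        (if ((kl.1:ℤ) - kl.2) = j then P.coeff kl.1 * (starRingEnd ℂ) (P.coeff kl.2) else 0)
          * Complex.exp ((j:ℂ)*θ*Complex.I))
      = (P.coeff kl.1 * (starRingEnd ℂ) (P.coeff kl.2))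
          * Complex.exp ((((kl.1:ℤ) - kl.2 : ℤ):ℂ)*θ*Complex.I) := by
    intro kl hkl
    simp only [ite_mul, zero_mul]
    rw [Finset.sum_ite_eq (Finset.Icc (-(n:ℤ)) (n:ℤ)) ((kl.1:ℤ) - kl.2)
      (fun j => P.coeff kl.1 * (starRingEnd ℂ) (P.coeff kl.2) * Complex.exp ((j:ℂ)*θ*Complex.I))]
    simp only [Finset.mem_product, Finset.mem_range] at hkl
    rw [if_pos]
    simp only [Finset.mem_Icc]
    omega
  calc ∑ j ∈ Finset.Icc (-(n:ℤ)) (n:ℤ),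
        (∑ kl ∈ Finset.range (n+1) ×ˢ Finset.range (n+1),
          (if ((kl.1:ℤ) - kl.2) = j then P.coeff kl.1 * (starRingEnd ℂ) (P.coeff kl.2) else 0))
          * Complex.exp ((j:ℂ)*θ*Complex.I)
      = ∑ kl ∈ Finset.range (n+1) ×ˢ Finset.range (n+1),
          ∑ j ∈ Finset.Icc (-(n:ℤ)) (n:ℤ),
          (if ((kl.1:ℤ) - kl.2) = j then P.coeff kl.1 * (starRingEnd ℂ) (P.coeff kl.2) else 0)
            * Complex.exp ((j:ℂ)*θ*Complex.I) := by
        simp only [Finset.sum_mul]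
        rw [Finset.sum_comm]
    _ = ∑ kl ∈ Finset.range (n+1) ×ˢ Finset.range (n+1),
          (P.coeff kl.1 * (starRingEnd ℂ) (P.coeff kl.2))
            * Complex.exp ((((kl.1:ℤ) - kl.2 : ℤ):ℂ)*θ*Complex.I) :=
        Finset.sum_congr rfl hL
    _ = ∑ k ∈ Finset.range (n+1), ∑ l ∈ Finset.range (n+1),
          (P.coeff k * Complex.exp (((k:ℤ):ℂ)*θ*Complex.I))
            * ((starRingEnd ℂ) (P.coeff l * Complex.exp (((l:ℤ):ℂ)*θ*Complex.I))) := by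
        rw [Finset.sum_product]
        apply Finset.sum_congr rfl
        intro k _
        apply Finset.sum_congr rfl
        intro l _
        rw [map_mul]
        have hconjexp : (starRingEnd ℂ) (Complex.exp (((l:ℤ):ℂ)*θ*Complex.I))
            = Complex.exp (-(((l:ℤ):ℂ)*θ*Complex.I)) := by
          rw [← Complex.exp_conj]
          congr 1
          simp only [map_mul, Complex.conj_I, map_intCast, Complex.conj_ofReal]
          ring
        rw [hconjexp]
        rw [show ((((k:ℤ) - l : ℤ)):ℂ)*θ*Complex.I
          = ((k:ℤ):ℂ)*θ*Complex.I + -(((l:ℤ):ℂ)*θ*Complex.I) by push_cast; ring]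
        rw [Complex.exp_add]
        ring

lemma final_assembly (P : Polynomial ℂ) (n : ℕ) (hn : 1 ≤ n) (hP : P ≠ 0)
    (hdeg : P.natDegree = n) (M : ℝ)
    (h : ∀ θ : ℝ, (‖P.eval (Complex.exp ((θ:ℂ)*Complex.I))‖:ℝ)^2
        = M^2*(1+Real.cos (n*θ))/2) :
    ∃ c : ℂ, c ≠ 0 ∧ P = Polynomial.C c * (1 + Polynomial.X^n) := by
  have hπ := Real.pi_pos
  have hn0 : (0:ℝ) < n := by exact_mod_cast hn
  set ρ : ℕ → ℂ := fun k => Complex.exp ((((2*k+1)*Real.pi/n : ℝ):ℂ) * Complex.I) with hρ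
  have hroots : ∀ k, k < n → P.eval (ρ k) = 0 := by
    intro k hk
    have h1 := h ((2*(k:ℝ)+1)*Real.pi/n)
    have harg : (n:ℝ) * ((2*(k:ℝ)+1)*Real.pi/n) = (k:ℝ)*(2*Real.pi) + Real.pi := by
      field_simp
    rw [harg] at h1
    have hcos : Real.cos ((k:ℝ)*(2*Real.pi) + Real.pi) = -1 := by
      exact_mod_cast Real.cos_nat_mul_two_pi_add_pi k
    rw [hcos] at h1
    have h2 : ‖P.eval (Complex.exp (((((2*(k:ℝ)+1)*Real.pi/n : ℝ)) : ℂ) * Complex.I))‖^2 = 0 := by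
      rw [h1]; ring
    have h4 : ‖P.eval (Complex.exp (((((2*(k:ℝ)+1)*Real.pi/n : ℝ)) : ℂ) * Complex.I))‖ = 0 := by
      nlinarith [norm_nonneg (P.eval (Complex.exp (((((2*(k:ℝ)+1)*Real.pi/n : ℝ)) : ℂ) * Complex.I)))]
    exact norm_eq_zero.mp h4
  have hρn : ∀ k : ℕ, (ρ k)^n = -1 := by
    intro k
    have hnC : (n:ℂ) ≠ 0 := Nat.cast_ne_zero.mpr (by omega)
    rw [hρ, ← Complex.exp_nat_mul]
    rw [show (n:ℂ) * ((((2*(k:ℕ)+1)*Real.pi/n : ℝ):ℂ) * Complex.I)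
        = ((2*k+1 : ℕ):ℂ) * ((Real.pi:ℂ) * Complex.I) by
      push_cast
      field_simp]
    rw [Complex.exp_nat_mul, Complex.exp_pi_mul_I]
    exact Odd.neg_one_pow ⟨k, by ring⟩
  have hρinj : ∀ i, i < n → ∀ j, j < n → ρ i = ρ j → i = j := by
    intro i hi j hj he
    have hbound : ∀ m : ℕ, m < n → 0 < ((2*(m:ℝ)+1)*Real.pi/n : ℝ)
        ∧ ((2*(m:ℝ)+1)*Real.pi/n : ℝ) < 2*Real.pi := by
      intro m hm
      have hm' : (m:ℝ) ≤ (n:ℝ) - 1 := by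
        have : (m:ℝ) + 1 ≤ n := by exact_mod_cast hm
        linarith
      constructor
      · positivity
      · rw [div_lt_iff₀ hn0]
        nlinarith
    have h1 : ((2*(i:ℝ)+1)*Real.pi/n : ℝ) = (2*(j:ℝ)+1)*Real.pi/n := by
      apply exp_window_inj
      · rw [abs_sub_lt_iff]
        obtain ⟨hi1, hi2⟩ := hbound i hi
        obtain ⟨hj1, hj2⟩ := hbound j hj
        constructor <;> linarith
      · have e1 : (((2*(i:ℝ)+1)*Real.pi/n : ℝ):ℂ) = (((2*(i:ℕ)+1)*Real.pi/n : ℝ):ℂ) := by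
          norm_num
        have e2 : (((2*(j:ℝ)+1)*Real.pi/n : ℝ):ℂ) = (((2*(j:ℕ)+1)*Real.pi/n : ℝ):ℂ) := by
          norm_num
        rw [e1, e2]
        exact he
    have h2 : (2*(i:ℝ)+1) = (2*(j:ℝ)+1) := by
      have h4 := congrArg (fun x : ℝ => x * (n:ℝ)) h1
      simp only [div_mul_cancel₀ _ hn0.ne'] at h4
      exact mul_right_cancel₀ (ne_of_gt hπ) h4
    have : (i:ℝ) = j := by linarith
    exact_mod_cast this
  have hdvd : ∀ k, k < n → (X - Polynomial.C (ρ k)) ∣ P :=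
    fun k hk => dvd_iff_isRoot.mpr (hroots k hk)
  set Q : Polynomial ℂ := ∏ k ∈ Finset.range n, (X - Polynomial.C (ρ k)) with hQdef
  have hcop : (↑(Finset.range n) : Set ℕ).Pairwise
      (Function.onFun IsCoprime fun k => (X - Polynomial.C (ρ k) : Polynomial ℂ)) := by
    intro i hi j hj hij
    simp only [Finset.coe_range, Set.mem_Iio] at hi hj
    exact coprime_XsubC (fun he => hij (hρinj i hi j hj he))
  have hproddvd : Q ∣ P :=
    Finset.prod_dvd_of_coprime hcop (fun k hk => hdvd k (Finset.mem_range.mp hk))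
  have hQmonic : Q.Monic := monic_prod_of_monic _ _ (fun k _ => monic_X_sub_C _)
  have hQdeg : Q.natDegree = n := by
    rw [hQdef, Polynomial.natDegree_prod _ _ (fun k _ => (monic_X_sub_C (ρ k)).ne_zero)]
    simp [natDegree_X_sub_C]
  have hXdeg : (Polynomial.X^n + 1 : Polynomial ℂ).natDegree = n := by
    rw [show (Polynomial.X^n + 1 : Polynomial ℂ) = Polynomial.X^n + Polynomial.C 1 by
      rw [Polynomial.C_1]]
    exact Polynomial.natDegree_X_pow_add_C
  have hXn : Q = Polynomial.X^n + 1 := by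
    have hDdvd : Q ∣ (Polynomial.X^n + 1 - Q) := by
      apply Finset.prod_dvd_of_coprime hcop
      intro k hk
      rw [dvd_iff_isRoot]
      show Polynomial.eval (ρ k) (Polynomial.X^n + 1 - Q) = 0
      have hQk : Q.eval (ρ k) = 0 := by
        rw [hQdef, Polynomial.eval_prod]
        apply Finset.prod_eq_zero hk
        simp
      simp [hQk, hρn k]
    by_cases hD0 : Polynomial.X^n + 1 - Q = 0
    · have := sub_eq_zero.mp hD0
      exact this.symm
    · exfalso
      have h5 := Polynomial.natDegree_le_of_dvd hDdvd hD0
      rw [hQdeg] at h5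
      have hle : (Polynomial.X^n + 1 - Q).natDegree ≤ n := by
        refine le_trans (Polynomial.natDegree_sub_le _ _) ?_
        rw [hXdeg, hQdeg]
        omega
      have hcn : (Polynomial.X^n + 1 - Q).coeff n = 0 := by
        have hQn : Q.coeff n = 1 := by
          have := hQmonic.coeff_natDegree
          rw [hQdeg] at this
          exact this
        have hXcn : (Polynomial.X^n + 1 : Polynomial ℂ).coeff n = 1 := by
          rw [Polynomial.coeff_add, Polynomial.coeff_X_pow, Polynomial.coeff_one]
          have : n ≠ 0 := by omega
          simp [this]
        rw [Polynomial.coeff_sub, hXcn, hQn]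
        ring
      have hlt : (Polynomial.X^n + 1 - Q).natDegree < n := by
        rcases lt_or_eq_of_le hle with h'|h'
        · exact h'
        · exfalso
          apply hD0
          rw [← Polynomial.leadingCoeff_eq_zero]
          rw [Polynomial.leadingCoeff, h', hcn]
      omega
  obtain ⟨Ec, hE⟩ := hproddvd
  have hEne : Ec ≠ 0 := by
    intro h0
    rw [h0, mul_zero] at hE
    exact hP hE
  have hdegE : Ec.natDegree = 0 := by
    have hmul := Polynomial.natDegree_mul hQmonic.ne_zero hEne
    rw [← hE, hdeg, hQdeg] at hmul
    omega
  obtain ⟨cc, hcc⟩ := Polynomial.natDegree_eq_zero.mp hdegE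
  refine ⟨cc, ?_, ?_⟩
  · intro h0
    rw [h0, map_zero] at hcc
    rw [← hcc] at hEne
    exact hEne rfl
  · rw [hE, hXn, ← hcc]
    ring

end TuranAux

open Polynomial

set_option maxHeartbeats 1000000 in
/-- **Turán's theorem.** Let `P` be a nontrivial complex polynomial of degree `n` such that
`|P(1)| = max_{|z|=1} |P(z)|`. Then every root `z₀` of `P` on the unit circle satisfies
`|arg z₀| ≥ π/n`; moreover if `|arg z₀| = π/n` then `P(z) = c(1 + zⁿ)` for some `c ≠ 0`. -/
theorem turan (P : Polynomial ℂ) (n : ℕ) (hn : 1 ≤ n) (hP : P ≠ 0)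
    (hdeg : P.natDegree = n)
    (hmax : ∀ z : ℂ, ‖z‖ = 1 → ‖P.eval z‖ ≤ ‖P.eval 1‖)
    (z₀ : ℂ) (hz₀ : ‖z₀‖ = 1) (hroot : P.eval z₀ = 0) :
    Real.pi / n ≤ |Complex.arg z₀| ∧
      (|Complex.arg z₀| = Real.pi / n → ∃ c : ℂ, c ≠ 0 ∧ P = C c * (1 + X ^ n)) := by
  have hπ := Real.pi_pos
  have hnorm1 : ∀ θ:ℝ, ‖Complex.exp ((θ:ℂ)*Complex.I)‖ = 1 := by
    intro θ
    rw [Complex.norm_exp_ofReal_mul_I]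
  have hM0 : P.eval 1 ≠ 0 := by
    intro h0
    apply hP
    apply Polynomial.eq_zero_of_infinite_isRoot
    have hsub : (fun x : ℝ => Complex.exp ((x:ℂ)*Complex.I)) '' (Set.Icc 0 1)
        ⊆ {x | P.IsRoot x} := by
      rintro _ ⟨x, hx, rfl⟩
      show P.eval _ = 0
      have h1 := hmax _ (hnorm1 x)
      rw [h0, norm_zero] at h1
      exact norm_le_zero_iff.mp h1
    apply Set.Infinite.mono hsub
    apply Set.Infinite.image
    · intro x hx y hy hxy
      apply TuranAux.exp_window_inj _ hxy
      rw [abs_sub_lt_iff]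
      obtain ⟨hx1, hx2⟩ := hx
      obtain ⟨hy1, hy2⟩ := hy
      constructor <;> nlinarith [Real.pi_gt_three]
    · exact Set.Icc_infinite one_pos
  set M : ℝ := ‖P.eval 1‖ with hMdef
  have hMpos : 0 < M := norm_pos_iff.mpr hM0
  have hM2pos : 0 < M^2 := by positivity
  obtain ⟨c, hc⟩ := TuranAux.poly_rep P n hdeg
  have hgle : ∀ θ:ℝ, ‖P.eval (Complex.exp ((θ:ℂ)*Complex.I))‖^2 ≤ M^2 := by
    intro θ
    have h1 := hmax _ (hnorm1 θ)
    nlinarith [norm_nonneg (P.eval (Complex.exp ((θ:ℂ)*Complex.I)))]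
  have him : ∀ θ, (TuranAux.tp n c θ).im = 0 := by
    intro θ; rw [hc θ]; exact Complex.ofReal_im _
  have hre : ∀ θ, (TuranAux.tp n c θ).re = ‖P.eval (Complex.exp ((θ:ℂ)*Complex.I))‖^2 := by
    intro θ; rw [hc θ]; exact Complex.ofReal_re _
  have habsz : ‖z₀‖ = 1 := by exact hz₀
  have hz0exp : Complex.exp ((z₀.arg :ℂ)*Complex.I) = z₀ := by
    have h1 := Complex.norm_mul_exp_arg_mul_I z₀
    rw [habsz] at h1
    simpa using h1
  have hargne : z₀.arg ≠ 0 := by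
    intro h0
    rw [h0] at hz0exp
    simp at hz0exp
    rw [← hz0exp] at hroot
    exact hM0 hroot
  have hstart0 : ‖P.eval (Complex.exp (((0:ℝ):ℂ)*Complex.I))‖^2 = M^2 := by
    simp [hMdef]
  rcases le_or_gt 0 z₀.arg with hsig|hsig
  · have hβabs : |z₀.arg| = z₀.arg := abs_of_nonneg hsig
    have hβpos : 0 < z₀.arg := lt_of_le_of_ne hsig (Ne.symm hargne)
    have htr := TuranAux.travel n hn c (M^2) hM2pos him
      (fun θ => by rw [hre θ]; positivity)
      (fun θ => by rw [hre θ]; exact hgle θ)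
      (by rw [hre 0]; exact hstart0)
      z₀.arg hβpos
      (by rw [hre z₀.arg, hz0exp, hroot]; simp)
    constructor
    · rw [hβabs]; exact htr.1
    · intro heq
      rw [hβabs] at heq
      have hall := htr.2 heq
      apply TuranAux.final_assembly P n hn hP hdeg M
      intro θ
      have h1 := hall θ
      rw [hre θ] at h1
      exact h1
  · have hβabs : |z₀.arg| = -z₀.arg := abs_of_neg hsig
    have hβpos : 0 < -z₀.arg := by linarith
    have hrefl := TuranAux.tp_reflect n c
    have himr : ∀ θ, (TuranAux.tp n (fun j => c (-j)) θ).im = 0 := by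
      intro θ; rw [hrefl θ]; exact him _
    have htr := TuranAux.travel n hn (fun j => c (-j)) (M^2) hM2pos himr
      (fun θ => by rw [hrefl θ, hre (-θ)]; positivity)
      (fun θ => by rw [hrefl θ, hre (-θ)]; exact hgle (-θ))
      (by rw [hrefl 0, neg_zero, hre 0]; exact hstart0)
      (-z₀.arg) hβpos
      (by rw [hrefl (-z₀.arg), neg_neg, hre z₀.arg, hz0exp, hroot]; simp)
    constructor
    · rw [hβabs]; exact htr.1
    · intro heq
      rw [hβabs] at heq
      have hall := htr.2 heq
      apply TuranAux.final_assembly P n hn hP hdeg M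
      intro θ
      have h1 := hall (-θ)
      rw [hrefl (-θ), neg_neg, hre θ] at h1
      rw [h1]
      rw [show (n:ℝ) * -θ = -((n:ℝ)*θ) by ring, Real.cos_neg]
end

section
/- (Injectivity of Γ_x for the Dirichlet kernel) Let x₁, …, x_N ∈ T be pairwise distinct with N ≤ f_c. If u, v ∈ R^N satisfy Σ_j ( u_j φ(t − x_j) + v_j φ'(t − x_j) ) = 0 for all t ∈ T, where φ is the Dirichlet kernel of degree f_c, then u = v = 0. -/
open Complex Polynomial Finset

noncomputable section
namespace GammaAux

def ec (t : ℝ) : ℂ := Complex.exp ((2 * Real.pi * t : ℝ) * Complex.I)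

lemma ec_ne (t : ℝ) : ec t ≠ 0 := Complex.exp_ne_zero _

lemma ec_add (s t : ℝ) : ec (s + t) = ec s * ec t := by
  rw [ec, ec, ec, ← Complex.exp_add]; push_cast; ring_nf

lemma ec_zero : ec 0 = 1 := by simp [ec]

lemma ec_zpow (k : ℤ) (t : ℝ) :
    ec t ^ k = Complex.exp ((2 * Real.pi * k * t : ℝ) * Complex.I) := by
  rw [ec, ← Complex.exp_int_mul]; congr 1; push_cast; ring

lemma ec_cos_sin (k : ℤ) (t : ℝ) :
    ec t ^ k = (Real.cos (2 * Real.pi * k * t) : ℂ)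
      + (Real.sin (2 * Real.pi * k * t) : ℂ) * Complex.I := by
  rw [ec_zpow, Complex.exp_mul_I, ← Complex.ofReal_cos, ← Complex.ofReal_sin]

/-- The character `t ↦ ec t ^ k` as a monoid hom on `Multiplicative ℝ`. -/
def chi (k : ℤ) : Multiplicative ℝ →* ℂ where
  toFun m := ec m.toAdd ^ k
  map_one' := by
    show ec ((1 : Multiplicative ℝ).toAdd) ^ k = 1
    have h0 : (1 : Multiplicative ℝ).toAdd = (0 : ℝ) := rfl
    rw [h0, ec_zero, one_zpow]
  map_mul' a b := by
    show ec ((a * b).toAdd) ^ k = ec a.toAdd ^ k * ec b.toAdd ^ k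
    have h0 : (a * b).toAdd = a.toAdd + b.toAdd := rfl
    rw [h0, ec_add, mul_zpow]

lemma chi_inj : Function.Injective chi := by
  intro k l hkl
  by_contra hne
  have hd : (k : ℝ) - l ≠ 0 := by
    intro h
    exact hne (by exact_mod_cast sub_eq_zero.mp (by exact_mod_cast h))
  set t : ℝ := 1 / (2 * ((k : ℝ) - l)) with ht
  have h1 : ec t ^ k = ec t ^ l := by
    have := congrFun (congrArg (fun f : Multiplicative ℝ →* ℂ => (f : Multiplicative ℝ → ℂ)) hkl) (Multiplicative.ofAdd t)
    simpa [chi] using this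
  have h2 : ec t ^ (k - l) = 1 := by
    rw [zpow_sub₀ (ec_ne t), h1, div_self (zpow_ne_zero _ (ec_ne t))]
  rw [ec_zpow] at h2
  have harg : (2 * Real.pi * ((k - l : ℤ) : ℝ) * t : ℝ) = Real.pi := by
    rw [ht]
    push_cast
    field_simp
  rw [harg] at h2
  rw [Complex.exp_pi_mul_I] at h2
  norm_num at h2

/-- Linear independence of the exponentials: a vanishing trigonometric polynomial
has vanishing coefficients. -/
lemma coeff_zero (n : ℕ) (c : ℤ → ℂ)
    (h : ∀ t : ℝ, ∑ k ∈ Finset.Icc (-(n : ℤ)) n, c k * ec t ^ k = 0) :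
    ∀ k ∈ Finset.Icc (-(n : ℤ)) n, c k = 0 := by
  have hli : LinearIndependent ℂ (fun k : ℤ => ((chi k : Multiplicative ℝ → ℂ))) :=
    (linearIndependent_monoidHom (Multiplicative ℝ) ℂ).comp chi chi_inj
  refine linearIndependent_iff'.mp hli _ c ?_
  funext m
  have := h m.toAdd
  simpa [chi, Finset.sum_apply, smul_eq_mul] using this


lemma sum_Icc_symm (n : ℕ) (f : ℤ → ℂ) :
    ∑ k ∈ Finset.Icc (-(n : ℤ)) n, f k
      = f 0 + ∑ k ∈ Finset.Icc 1 n, (f k + f (-(k : ℤ))) := by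
  induction n with
  | zero => simp
  | succ n ih =>
      have h1 : Finset.Icc (-((n : ℕ) + 1 : ℤ)) ((n : ℕ) + 1 : ℤ)
          = insert (-((n : ℤ) + 1)) (insert ((n : ℤ) + 1) (Finset.Icc (-(n : ℤ)) n)) := by
        ext a
        simp only [Finset.mem_Icc, Finset.mem_insert]
        omega
      have h2 : Finset.Icc 1 (n + 1) = insert (n + 1) (Finset.Icc 1 n) := by
        ext a
        simp only [Finset.mem_Icc, Finset.mem_insert]
        omega
      have hn1 : ((n : ℕ) + 1 : ℤ) ∉ insert (-((n : ℤ) + 1)) (Finset.Icc (-(n : ℤ)) n) := by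
        simp only [Finset.mem_insert, Finset.mem_Icc]
        omega
      have hn2 : (-((n : ℤ) + 1)) ∉ (insert ((n : ℤ) + 1) (Finset.Icc (-(n : ℤ)) n)) := by
        simp only [Finset.mem_insert, Finset.mem_Icc]
        omega
      have hn3 : (n + 1) ∉ Finset.Icc 1 n := by
        simp only [Finset.mem_Icc]
        omega
      push_cast
      push_cast at h1
      rw [h1, Finset.sum_insert hn2, Finset.sum_insert (by
        simp only [Finset.mem_Icc]; omega : ((n : ℤ) + 1) ∉ Finset.Icc (-(n : ℤ)) n),
        ih, h2, Finset.sum_insert hn3]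
      push_cast
      ring


lemma vandermonde {n N : ℕ} (hN : N ≤ n) (w : Fin N → ℂ) (hw0 : ∀ i, w i ≠ 0)
    (hwinj : Function.Injective w) (A B : Fin N → ℂ)
    (h : ∀ m ∈ Finset.range (2 * n + 1), ∑ i, (A i + (m : ℂ) * B i) * w i ^ m = 0) :
    ∀ i, A i = 0 ∧ B i = 0 := by
  classical
  have key : ∀ p : ℂ[X], p.natDegree < 2 * n + 1 →
      ∑ i, (A i * p.eval (w i) + B i * (w i * (Polynomial.derivative p).eval (w i))) = 0 := by
    intro p hp
    have hev : ∀ z : ℂ, p.eval z = ∑ m ∈ Finset.range (2 * n + 1), p.coeff m * z ^ m :=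
      fun z => Polynomial.eval_eq_sum_range' hp z
    have hdev : ∀ z : ℂ, z * (Polynomial.derivative p).eval z
        = ∑ m ∈ Finset.range (2 * n + 1), (m : ℂ) * p.coeff m * z ^ m := by
      intro z
      conv_lhs => rw [p.as_sum_range' _ hp]
      rw [map_sum]
      simp only [Polynomial.derivative_monomial, Polynomial.eval_finset_sum,
        Polynomial.eval_monomial]
      rw [Finset.mul_sum]
      refine Finset.sum_congr rfl fun m _ => ?_
      rcases Nat.eq_zero_or_pos m with h0 | h0
      · subst h0; simp
      · have hm1 : m - 1 + 1 = m := Nat.succ_pred_eq_of_pos h0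
        calc z * (p.coeff m * ↑m * z ^ (m - 1))
            = (m : ℂ) * p.coeff m * (z ^ (m - 1) * z) := by ring
          _ = (m : ℂ) * p.coeff m * z ^ m := by rw [← pow_succ, hm1]
    calc ∑ i, (A i * p.eval (w i) + B i * (w i * (Polynomial.derivative p).eval (w i)))
        = ∑ i, ∑ m ∈ Finset.range (2 * n + 1), p.coeff m * ((A i + (m : ℂ) * B i) * w i ^ m) := by
          refine Finset.sum_congr rfl fun i _ => ?_
          rw [hev (w i), hdev (w i), Finset.mul_sum, Finset.mul_sum, ← Finset.sum_add_distrib]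
          exact Finset.sum_congr rfl fun m _ => by ring
      _ = ∑ m ∈ Finset.range (2 * n + 1), p.coeff m * ∑ i, (A i + (m : ℂ) * B i) * w i ^ m := by
          rw [Finset.sum_comm]
          exact Finset.sum_congr rfl fun m _ => by rw [Finset.mul_sum]
      _ = 0 := Finset.sum_eq_zero fun m hm => by rw [h m hm, mul_zero]
  set pp : Fin N → ℂ[X] := fun i => ∏ j ∈ Finset.univ.erase i, (X - C (w j)) ^ 2 with hpp
  have hppdeg : ∀ i, (pp i).natDegree ≤ 2 * (N - 1) := by
    intro i
    refine le_trans (Polynomial.natDegree_prod_le _ _) ?_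
    have hc : ∀ j ∈ Finset.univ.erase i, ((X - C (w j)) ^ 2).natDegree = 2 := fun j _ => by
      rw [Polynomial.natDegree_pow, Polynomial.natDegree_X_sub_C]
    rw [Finset.sum_congr rfl hc, Finset.sum_const,
      Finset.card_erase_of_mem (Finset.mem_univ i), Finset.card_univ, Fintype.card_fin,
      smul_eq_mul, mul_comm]
  have hppe0 : ∀ i j, j ≠ i → (pp i).eval (w j) = 0 := by
    intro i j hij
    rw [hpp, Polynomial.eval_prod]
    refine Finset.prod_eq_zero (Finset.mem_erase.mpr ⟨hij, Finset.mem_univ j⟩) ?_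
    simp
  have hppne : ∀ i, (pp i).eval (w i) ≠ 0 := by
    intro i
    rw [hpp, Polynomial.eval_prod]
    refine Finset.prod_ne_zero_iff.mpr fun j hj => ?_
    simp only [Polynomial.eval_pow, Polynomial.eval_sub, Polynomial.eval_X, Polynomial.eval_C]
    refine pow_ne_zero _ (sub_ne_zero.mpr fun hwe => ?_)
    exact (Finset.mem_erase.mp hj).1 (hwinj hwe.symm)
  have hppd0 : ∀ i j, j ≠ i → (Polynomial.derivative (pp i)).eval (w j) = 0 := by
    intro i j hij
    have hmem : j ∈ Finset.univ.erase i := Finset.mem_erase.mpr ⟨hij, Finset.mem_univ j⟩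
    have hfac : pp i
        = (X - C (w j)) ^ 2 * ∏ l ∈ (Finset.univ.erase i).erase j, (X - C (w l)) ^ 2 :=
      (Finset.mul_prod_erase _ _ hmem).symm
    rw [hfac, Polynomial.derivative_mul, Polynomial.eval_add, Polynomial.eval_mul,
      Polynomial.eval_mul, Polynomial.derivative_pow, Polynomial.derivative_X_sub_C]
    simp
  intro i
  have hN1 : 0 < N := i.pos
  set qq : ℂ[X] := (X - C (w i)) * pp i with hqq
  have hqdeg : qq.natDegree < 2 * n + 1 := by
    have h1 : qq.natDegree ≤ (X - C (w i)).natDegree + (pp i).natDegree :=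
      Polynomial.natDegree_mul_le
    rw [Polynomial.natDegree_X_sub_C] at h1
    have := hppdeg i
    omega
  have hpdeg : (pp i).natDegree < 2 * n + 1 := lt_of_le_of_lt (hppdeg i) (by omega)
  have hq0 : ∀ j, qq.eval (w j) = 0 := by
    intro j
    rw [hqq, Polynomial.eval_mul]
    rcases eq_or_ne j i with rfl | hij
    · simp
    · rw [hppe0 i j hij, mul_zero]
  have hqd : Polynomial.derivative qq = pp i + (X - C (w i)) * Polynomial.derivative (pp i) := by
    rw [hqq, Polynomial.derivative_mul, Polynomial.derivative_X_sub_C, one_mul]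
  have hqdi : (Polynomial.derivative qq).eval (w i) = (pp i).eval (w i) := by
    rw [hqd]; simp
  have hqdj : ∀ j, j ≠ i → (Polynomial.derivative qq).eval (w j) = 0 := by
    intro j hij
    rw [hqd, Polynomial.eval_add, Polynomial.eval_mul, hppe0 i j hij, hppd0 i j hij]
    ring
  have hBi : B i = 0 := by
    have hk := key qq hqdeg
    rw [Finset.sum_eq_single i (fun j _ hji => by
        rw [hq0 j, hqdj j hji]; ring) (fun hni => absurd (Finset.mem_univ i) hni)] at hk
    rw [hq0 i, hqdi, mul_zero, zero_add] at hk
    rcases mul_eq_zero.mp hk with hB | hwp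
    · exact hB
    · exact absurd (mul_eq_zero.mp hwp) (by push_neg; exact ⟨hw0 i, hppne i⟩)
  have hAi : A i = 0 := by
    have hk := key (pp i) hpdeg
    rw [Finset.sum_eq_single i (fun j _ hji => by
        rw [hppe0 i j hji, hppd0 i j hji]; ring)
      (fun hni => absurd (Finset.mem_univ i) hni)] at hk
    rw [hBi, zero_mul, add_zero] at hk
    exact (mul_eq_zero.mp hk).resolve_right (hppne i)
  exact ⟨hAi, hBi⟩


lemma pair_cos (s : ℝ) (k : ℕ) : ec s ^ (k : ℤ) + ec s ^ (-(k : ℤ))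
    = 2 * (Real.cos (2 * Real.pi * k * s) : ℂ) := by
  rw [ec_cos_sin, ec_cos_sin]
  push_cast
  rw [show (2 : ℂ) * Real.pi * (-(k : ℂ)) * s = -(2 * Real.pi * k * s) by ring,
    Complex.cos_neg, Complex.sin_neg]
  ring

lemma pair_sin (s : ℝ) (k : ℕ) :
    (2 * (Real.pi : ℂ) * Complex.I * ((k : ℤ) : ℂ)) * ec s ^ (k : ℤ)
      + (2 * (Real.pi : ℂ) * Complex.I * ((-(k : ℤ) : ℤ) : ℂ)) * ec s ^ (-(k : ℤ))
    = 2 * ((-(2 * Real.pi * k) * Real.sin (2 * Real.pi * k * s) : ℝ) : ℂ) := by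
  rw [ec_cos_sin, ec_cos_sin]
  push_cast
  rw [show (2 : ℂ) * Real.pi * (-(k : ℂ)) * s = -(2 * Real.pi * k * s) by ring,
    Complex.cos_neg, Complex.sin_neg]
  linear_combination (4 * (Real.pi : ℂ) * k * Complex.sin (2 * (Real.pi:ℂ) * k * s)) * Complex.I_sq

end GammaAux

/-- **Injectivity of `Γ_x` for the Dirichlet kernel.** Let `x₁, …, x_N` be pairwise distinct
points of the torus with `N ≤ f_c`, and let `φ` be the Dirichlet kernel of degree `f_c`.
If `u, v ∈ ℝ^N` satisfy `∑ⱼ (uⱼ φ(t − xⱼ) + vⱼ φ'(t − xⱼ)) = 0` for all `t`, then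
`u = v = 0`. -/
theorem gamma_injective_dirichlet (fc : ℕ) (φ : ℝ → ℝ)
    (hφ : ∀ s : ℝ, φ s = 1 + 2 * ∑ k ∈ Finset.Icc 1 fc, Real.cos (2 * Real.pi * k * s))
    (N : ℕ) (hN : N ≤ fc) (x : Fin N → ℝ)
    (hx : Function.Injective (fun i => ((x i : ℝ) : AddCircle (1 : ℝ))))
    (u v : Fin N → ℝ)
    (h : ∀ t : ℝ, ∑ i, (u i * φ (t - x i) + v i * deriv φ (t - x i)) = 0) :
    u = 0 ∧ v = 0 := by
  classical
  open GammaAux in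
  -- Step 1: complex form of φ
  have hφC : ∀ s : ℝ, ((φ s : ℝ) : ℂ) = ∑ k ∈ Finset.Icc (-(fc : ℤ)) fc, ec s ^ k := by
    intro s
    rw [GammaAux.sum_Icc_symm fc (fun k : ℤ => ec s ^ k)]
    rw [Finset.sum_congr rfl (fun k _ => GammaAux.pair_cos s k), zpow_zero, hφ s]
    push_cast
    rw [Finset.mul_sum]
  -- Step 2: real derivative of φ
  have hder : ∀ s : ℝ, deriv φ s
      = 2 * ∑ k ∈ Finset.Icc 1 fc, (-(2 * Real.pi * k) * Real.sin (2 * Real.pi * k * s)) := by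
    intro s
    have hD : HasDerivAt φ
        (2 * ∑ k ∈ Finset.Icc 1 fc, (-(2 * Real.pi * k) * Real.sin (2 * Real.pi * k * s))) s := by
      rw [funext hφ]
      have hterm : ∀ k ∈ Finset.Icc 1 fc,
          HasDerivAt (fun s : ℝ => Real.cos (2 * Real.pi * k * s))
            (-(2 * Real.pi * k) * Real.sin (2 * Real.pi * k * s)) s := by
        intro k _
        have hlin : HasDerivAt (fun s : ℝ => 2 * Real.pi * k * s) (2 * Real.pi * k) s := by
          simpa using (hasDerivAt_id s).const_mul (2 * Real.pi * (k : ℝ))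
        have hc := hlin.cos
        convert hc using 1
        ring
      exact ((HasDerivAt.fun_sum hterm).const_mul 2).const_add 1
    exact hD.deriv
  -- Step 3: complex form of deriv φ
  have hdC : ∀ s : ℝ, ((deriv φ s : ℝ) : ℂ)
      = ∑ k ∈ Finset.Icc (-(fc : ℤ)) fc, (2 * (Real.pi : ℂ) * Complex.I * (k : ℂ)) * ec s ^ k := by
    intro s
    rw [GammaAux.sum_Icc_symm fc (fun k : ℤ => (2 * (Real.pi : ℂ) * Complex.I * (k : ℂ)) * ec s ^ k)]
    rw [Finset.sum_congr rfl (fun k _ => GammaAux.pair_sin s k), hder s]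
    push_cast
    rw [Finset.mul_sum]
    ring
  -- Step 4: expand the hypothesis into a vanishing trigonometric polynomial
  have hkey : ∀ t : ℝ, ∑ k ∈ Finset.Icc (-(fc : ℤ)) fc,
      (∑ i, ((u i : ℂ) + 2 * (Real.pi : ℂ) * Complex.I * (k : ℂ) * v i) * ec (x i) ^ (-k))
        * ec t ^ k = 0 := by
    intro t
    have hsplit : ∀ (k : ℤ) (i : Fin N), ec (t - x i) ^ k = ec t ^ k * ec (x i) ^ (-k) := by
      intro k i
      have : ec t = ec (t - x i) * ec (x i) := by
        rw [← GammaAux.ec_add]; norm_num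
      rw [zpow_neg, eq_comm, mul_inv_eq_iff_eq_mul₀ (zpow_ne_zero _ (GammaAux.ec_ne _)),
        ← mul_zpow, ← this]
    have h0 : ((∑ i, (u i * φ (t - x i) + v i * deriv φ (t - x i)) : ℝ) : ℂ) = 0 := by
      rw [h t]; norm_num
    push_cast at h0
    calc ∑ k ∈ Finset.Icc (-(fc : ℤ)) fc,
          (∑ i, ((u i : ℂ) + 2 * (Real.pi : ℂ) * Complex.I * (k : ℂ) * v i) * ec (x i) ^ (-k))
            * ec t ^ k
        = ∑ k ∈ Finset.Icc (-(fc : ℤ)) fc, ∑ i,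
            ((u i : ℂ) * (ec t ^ k * ec (x i) ^ (-k))
              + (v i : ℂ) * ((2 * (Real.pi : ℂ) * Complex.I * (k : ℂ)) * (ec t ^ k * ec (x i) ^ (-k)))) := by
          refine Finset.sum_congr rfl fun k _ => ?_
          rw [Finset.sum_mul]
          exact Finset.sum_congr rfl fun i _ => by ring
      _ = ∑ i, ∑ k ∈ Finset.Icc (-(fc : ℤ)) fc,
            ((u i : ℂ) * ec (t - x i) ^ k
              + (v i : ℂ) * ((2 * (Real.pi : ℂ) * Complex.I * (k : ℂ)) * ec (t - x i) ^ k)) := by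
          rw [Finset.sum_comm]
          exact Finset.sum_congr rfl fun i _ => Finset.sum_congr rfl fun k _ => by
            rw [hsplit k i]
      _ = ∑ i, ((u i : ℂ) * ((φ (t - x i) : ℝ) : ℂ) + (v i : ℂ) * ((deriv φ (t - x i) : ℝ) : ℂ)) := by
          refine Finset.sum_congr rfl fun i _ => ?_
          rw [hφC (t - x i), hdC (t - x i), Finset.mul_sum, Finset.mul_sum,
            ← Finset.sum_add_distrib]
      _ = 0 := h0
  have hcoef := GammaAux.coeff_zero fc _ hkey
  -- Step 5: shift to a polynomial system
  set w : Fin N → ℂ := fun i => (ec (x i))⁻¹ with hwdef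
  have hw0 : ∀ i, w i ≠ 0 := fun i => inv_ne_zero (GammaAux.ec_ne _)
  have hwinj : Function.Injective w := by
    intro i j hij
    apply hx
    have hec : ec (x i) = ec (x j) := by
      have := congrArg Inv.inv hij
      simpa [hwdef] using this
    rw [GammaAux.ec, GammaAux.ec] at hec
    obtain ⟨m, hm⟩ := Complex.exp_eq_exp_iff_exists_int.mp hec
    have him := congrArg Complex.im hm
    push_cast at him
    simp [Complex.add_im, Complex.mul_im] at him
    have hxm : x i - x j = (m : ℝ) := by
      have h2 : 2 * Real.pi * (x i - x j - m) = 0 := by linarith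
      rcases mul_eq_zero.mp h2 with h3 | h4
      · exact absurd h3 (by positivity)
      · linarith
    show ((x i : ℝ) : AddCircle (1 : ℝ)) = ((x j : ℝ) : AddCircle (1 : ℝ))
    rw [QuotientAddGroup.eq_iff_sub_mem]
    exact AddSubgroup.mem_zmultiples_iff.mpr ⟨m, by rw [hxm]; simp⟩
  have hsys : ∀ m ∈ Finset.range (2 * fc + 1),
      ∑ i, (((u i : ℂ) - 2 * (Real.pi : ℂ) * Complex.I * (fc : ℂ) * v i) * ec (x i) ^ (fc : ℤ)
        + (m : ℂ) * ((2 * (Real.pi : ℂ) * Complex.I * (v i : ℂ)) * ec (x i) ^ (fc : ℤ)))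
          * w i ^ m = 0 := by
    intro m hm
    have hmem : ((m : ℤ) - fc) ∈ Finset.Icc (-(fc : ℤ)) fc := by
      simp only [Finset.mem_range] at hm
      simp only [Finset.mem_Icc]
      omega
    have hc := hcoef _ hmem
    rw [← hc]
    refine Finset.sum_congr rfl fun i _ => ?_
    have hz : ec (x i) ^ (-((m : ℤ) - fc)) = ec (x i) ^ (fc : ℤ) * w i ^ m := by
      rw [show -((m : ℤ) - fc) = (fc : ℤ) + (-(m : ℤ)) by ring,
        zpow_add₀ (GammaAux.ec_ne _), zpow_neg, ← inv_zpow, hwdef]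
      norm_cast
    rw [hz]
    push_cast
    ring
  have hAB := GammaAux.vandermonde hN w hw0 hwinj _ _ hsys
  have huv : ∀ i, u i = 0 ∧ v i = 0 := by
    intro i
    obtain ⟨hA, hB⟩ := hAB i
    have hecne : ec (x i) ^ (fc : ℤ) ≠ 0 := zpow_ne_zero _ (GammaAux.ec_ne _)
    have h2πI : (2 : ℂ) * (Real.pi : ℂ) * Complex.I ≠ 0 := by
      simp [Real.pi_ne_zero, Complex.I_ne_zero]
    have hv : v i = 0 := by
      rcases mul_eq_zero.mp hB with h1 | h2
      · rcases mul_eq_zero.mp h1 with h3 | h4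
        · exact absurd h3 h2πI
        · exact_mod_cast h4
      · exact absurd h2 hecne
    have hu : u i = 0 := by
      rcases mul_eq_zero.mp hA with h1 | h2
      · rw [hv] at h1
        push_cast at h1
        simpa using h1
      · exact absurd h2 hecne
    exact ⟨hu, hv⟩
  exact ⟨funext fun i => (huv i).1, funext fun i => (huv i).2⟩
end
end
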